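/- arXiv:2006.16847 — 4 statements merged into one kernel-verified Lean document; each statement's English description precedes it below -/
import Mathlib

section
/- Hoeffding's theorem: Let p(z) = Σ_{k=0}^d p_k z^k be a real-rooted polynomial with p_k ≥ 0 and p(1) = 1, and define s by Σ_{k=0}^d k·p_k = d·s. If b and c are non-negative integers with b ≤ ds ≤ c, then Σ_{k=b}^c p_k ≥ Σ_{k=b}^c C(d,k) s^k (1-s)^{d-k}. -/
/- Auxiliary development for Hoeffding's theorem on the number of successes
in independent trials (W. Hoeffding, 1956). -/

namespace HoeffdingAux


noncomputable def pbw : List ℝ → ℕ → ℝ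
  | [], 0 => 1
  | [], _+1 => 0
  | a :: l, 0 => (1 - a) * pbw l 0
  | a :: l, k+1 => (1 - a) * pbw l (k+1) + a * pbw l k

@[simp] lemma pbw_nil_zero : pbw [] 0 = 1 := rfl
@[simp] lemma pbw_nil_succ (k : ℕ) : pbw [] (k+1) = 0 := rfl
@[simp] lemma pbw_cons_zero (a : ℝ) (l : List ℝ) : pbw (a :: l) 0 = (1 - a) * pbw l 0 := rfl
@[simp] lemma pbw_cons_succ (a : ℝ) (l : List ℝ) (k : ℕ) :
    pbw (a :: l) (k+1) = (1 - a) * pbw l (k+1) + a * pbw l k := rfl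

lemma pbw_eq_zero_of_gt : ∀ (l : List ℝ) (k : ℕ), l.length < k → pbw l k = 0 := by
  intro l
  induction l with
  | nil => intro k hk; cases k with
    | zero => omega
    | succ k => simp
  | cons a l ih =>
    intro k hk
    cases k with
    | zero => simp at hk
    | succ k =>
      simp only [List.length_cons] at hk
      rw [pbw_cons_succ, ih (k+1) (by omega), ih k (by omega)]
      ring

lemma pbw_swap (a b : ℝ) (l : List ℝ) (k : ℕ) :
    pbw (a :: b :: l) k = pbw (b :: a :: l) k := by
  match k with
  | 0 => simp; ring
  | 1 => simp; ring
  | (k+2) => simp; ring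

lemma pbw_perm {l l' : List ℝ} (h : l.Perm l') : ∀ k, pbw l k = pbw l' k := by
  induction h with
  | nil => intro k; rfl
  | cons a _ ih =>
    intro k
    cases k with
    | zero => simp [ih 0]
    | succ k => simp [ih k, ih (k+1)]
  | swap a b l => intro k; exact pbw_swap b a l k
  | trans _ _ ih1 ih2 => intro k; rw [ih1 k, ih2 k]

lemma pbw_sum_one : ∀ (l : List ℝ), ∑ k ∈ Finset.range (l.length + 1), pbw l k = 1 := by
  intro l
  induction l with
  | nil => simp
  | cons a l ih =>
    rw [List.length_cons]
    rw [Finset.sum_range_succ' (fun k => pbw (a :: l) k)]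
    simp only [pbw_cons_succ, pbw_cons_zero]
    rw [Finset.sum_add_distrib, ← Finset.mul_sum, ← Finset.mul_sum]
    have h1 : ∑ k ∈ Finset.range (l.length + 1), pbw l (k+1)
        = ∑ k ∈ Finset.range (l.length + 1), pbw l k - pbw l 0 := by
      rw [Finset.sum_range_succ' (fun k => pbw l k)]
      have : pbw l (l.length + 1) = 0 := pbw_eq_zero_of_gt l _ (by omega)
      rw [Finset.sum_range_succ, this]
      ring
    rw [h1, ih]
    ring

lemma pbw_nonneg {l : List ℝ} (h : ∀ x ∈ l, 0 ≤ x ∧ x ≤ 1) : ∀ k, 0 ≤ pbw l k := by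
  induction l with
  | nil => intro k; cases k <;> simp
  | cons a l ih =>
    intro k
    have ha := h a (by simp)
    have hl : ∀ x ∈ l, 0 ≤ x ∧ x ≤ 1 := fun x hx => h x (List.mem_cons_of_mem _ hx)
    have h1 : 0 ≤ 1 - a := by linarith [ha.2]
    cases k with
    | zero => exact mul_nonneg h1 (ih hl 0)
    | succ k =>
      exact add_nonneg (mul_nonneg h1 (ih hl (k+1))) (mul_nonneg ha.1 (ih hl k))

lemma pbw_moment : ∀ (l : List ℝ),
    ∑ k ∈ Finset.range (l.length + 1), (k : ℝ) * pbw l k = l.sum := by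
  intro l
  induction l with
  | nil => simp
  | cons a l ih =>
    rw [List.length_cons]
    rw [Finset.sum_range_succ' (fun k => (k:ℝ) * pbw (a :: l) k)]
    simp only [pbw_cons_succ, pbw_cons_zero, Nat.cast_zero, zero_mul, add_zero, Nat.cast_add,
      Nat.cast_one]
    have expand : ∀ k ∈ Finset.range (l.length + 1),
        ((k:ℝ)+1) * ((1 - a) * pbw l (k+1) + a * pbw l k)
        = (1-a) * (((k:ℝ)+1) * pbw l (k+1)) + a * ((k:ℝ) * pbw l k) + a * pbw l k := by
      intro k _; ring
    rw [Finset.sum_congr rfl expand]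
    rw [Finset.sum_add_distrib, Finset.sum_add_distrib, ← Finset.mul_sum, ← Finset.mul_sum,
      ← Finset.mul_sum]
    have h1 : ∑ k ∈ Finset.range (l.length + 1), ((k:ℝ)+1) * pbw l (k+1)
        = ∑ k ∈ Finset.range (l.length + 1), (k:ℝ) * pbw l k := by
      rw [Finset.sum_range_succ' (fun k => (k:ℝ) * pbw l k)]
      have : pbw l (l.length + 1) = 0 := pbw_eq_zero_of_gt l _ (by omega)
      rw [Finset.sum_range_succ, this]
      push_cast
      simp
    rw [h1, ih, pbw_sum_one, List.sum_cons]
    ring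

@[simp] lemma pbw_zero_cons (l : List ℝ) : ∀ k, pbw ((0:ℝ) :: l) k = pbw l k := by
  intro k; cases k <;> simp

lemma pbw_one_cons_succ (l : List ℝ) (k : ℕ) : pbw ((1:ℝ) :: l) (k+1) = pbw l k := by simp

@[simp] lemma pbw_one_cons_zero (l : List ℝ) : pbw ((1:ℝ) :: l) 0 = 0 := by simp

lemma pbw_replicate_le (n : ℕ) (x : ℝ) : ∀ k,
    pbw (List.replicate n x) k = (n.choose k : ℝ) * x^k * (1-x)^(n-k) := by
  induction n with
  | zero =>
    intro k
    cases k with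
    | zero => simp
    | succ k => simp
  | succ n ih =>
    intro k
    rw [List.replicate_succ]
    cases k with
    | zero =>
      rw [pbw_cons_zero, ih 0]
      simp [pow_succ]
      ring
    | succ k =>
      rw [pbw_cons_succ, ih (k+1), ih k]
      rcases lt_or_ge k n with h | h
      · -- k + 1 ≤ n
        have e1 : n - k = (n - (k+1)) + 1 := by omega
        have e2 : n + 1 - (k+1) = n - k := by omega
        rw [e2, e1]
        have hch : ((n+1).choose (k+1) : ℝ) = (n.choose (k+1) : ℝ) + (n.choose k : ℝ) := by
          rw [Nat.choose_succ_succ]; push_cast; ring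
        rw [hch]
        ring
      · -- k ≥ n
        rcases Nat.eq_or_lt_of_le h with rfl | h2
        · -- k = n
          have e0 : n - (n + 1) = 0 := by omega
          have e1 : n - n = 0 := by omega
          have e2 : n + 1 - (n+1) = 0 := by omega
          rw [e0, e1, e2, Nat.choose_self, Nat.choose_self, Nat.choose_succ_self]
          push_cast
          ring
        · -- k > n
          have c1 : n.choose (k+1) = 0 := Nat.choose_eq_zero_of_lt (by omega)
          have c2 : n.choose k = 0 := Nat.choose_eq_zero_of_lt (by omega)
          have c3 : (n+1).choose (k+1) = 0 := Nat.choose_eq_zero_of_lt (by omega)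
          rw [c1, c2, c3]
          push_cast
          ring

lemma pbw_reflect : ∀ (l : List ℝ) (k j : ℕ), k + j = l.length →
    pbw (l.map (fun x => 1 - x)) k = pbw l j := by
  intro l
  induction l with
  | nil => intro k j h; simp at h; simp [h.1, h.2]
  | cons a l ih =>
    intro k j h
    simp only [List.length_cons] at h
    rw [List.map_cons]
    cases k with
    | zero =>
      -- j = l.length + 1
      have hj : j = l.length + 1 := by omega
      subst hj
      rw [pbw_cons_zero, pbw_cons_succ]
      have h0 : pbw l (l.length + 1) = 0 := pbw_eq_zero_of_gt l _ (by omega)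
      rw [h0, ih 0 l.length (by omega)]
      ring
    | succ k =>
      cases j with
      | zero =>
        -- k = l.length
        have hk : k = l.length := by omega
        subst hk
        rw [pbw_cons_succ, pbw_cons_zero]
        have h0 : pbw (l.map (fun x => 1 - x)) (l.length + 1) = 0 :=
          pbw_eq_zero_of_gt _ _ (by simp)
        rw [h0, ih l.length 0 (by omega)]
        ring
      | succ j =>
        rw [pbw_cons_succ, pbw_cons_succ]
        rw [ih (k+1) j (by omega), ih k (j+1) (by omega)]
        ring


noncomputable def pbz (l : List ℝ) (c : ℤ) : ℝ := if 0 ≤ c then pbw l c.toNat else 0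

noncomputable def cdfz (l : List ℝ) (c : ℤ) : ℝ :=
  ∑ k ∈ Finset.range (l.length + 1), if (k:ℤ) ≤ c then pbw l k else 0

lemma cdfz_neg {l : List ℝ} {c : ℤ} (h : c < 0) : cdfz l c = 0 := by
  unfold cdfz
  apply Finset.sum_eq_zero
  intro k _
  rw [if_neg (by omega)]

lemma cdfz_full {l : List ℝ} {c : ℤ} (h : (l.length : ℤ) ≤ c) : cdfz l c = 1 := by
  unfold cdfz
  rw [← pbw_sum_one l]
  apply Finset.sum_congr rfl
  intro k hk
  rw [if_pos]
  simp only [Finset.mem_range] at hk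
  omega

lemma cdfz_perm {l l' : List ℝ} (h : l.Perm l') (c : ℤ) : cdfz l c = cdfz l' c := by
  unfold cdfz
  rw [h.length_eq]
  apply Finset.sum_congr rfl
  intro k _
  rw [pbw_perm h]

lemma cdfz_cons (a : ℝ) (l : List ℝ) (c : ℤ) :
    cdfz (a :: l) c = (1 - a) * cdfz l c + a * cdfz l (c-1) := by
  have key : cdfz (a :: l) c
      = ∑ k ∈ Finset.range (l.length + 1 + 1), if (k:ℤ) ≤ c then pbw (a :: l) k else 0 := rfl
  rw [key]
  rw [Finset.sum_range_succ' (fun k => if (k:ℤ) ≤ c then pbw (a :: l) k else 0)]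
  have step : ∀ k, (if ((k+1:ℕ):ℤ) ≤ c then pbw (a :: l) (k+1) else 0)
      = (1-a) * (if ((k+1:ℕ):ℤ) ≤ c then pbw l (k+1) else 0)
        + a * (if ((k:ℕ):ℤ) ≤ c - 1 then pbw l k else 0) := by
    intro k
    have : (((k+1:ℕ)):ℤ) ≤ c ↔ ((k:ℕ):ℤ) ≤ c - 1 := by push_cast; omega
    by_cases h : ((k:ℕ):ℤ) ≤ c - 1
    · rw [if_pos (this.mpr h), if_pos (this.mpr h), if_pos h]
      simp [pbw]
    · rw [if_neg (fun hh => h (this.mp hh)), if_neg (fun hh => h (this.mp hh)), if_neg h]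
      ring
  rw [Finset.sum_congr rfl (fun k _ => step k)]
  rw [Finset.sum_add_distrib, ← Finset.mul_sum, ← Finset.mul_sum]
  have e2 : ∑ k ∈ Finset.range (l.length + 1), (if ((k:ℕ):ℤ) ≤ c - 1 then pbw l k else 0)
      = cdfz l (c-1) := rfl
  have e1 : cdfz l c = ∑ k ∈ Finset.range (l.length + 1), (if ((k+1:ℕ):ℤ) ≤ c then pbw l (k+1) else 0)
      + (if ((0:ℕ):ℤ) ≤ c then pbw l 0 else 0) := by
    unfold cdfz
    rw [Finset.sum_range_succ' (fun k => if ((k:ℕ):ℤ) ≤ c then pbw l k else 0)]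
    congr 1
    rw [Finset.sum_range_succ]
    have : pbw l (l.length + 1) = 0 := pbw_eq_zero_of_gt l _ (by omega)
    rw [this]
    simp
  have h0 : (if ((0:ℕ):ℤ) ≤ c then pbw (a :: l) 0 else 0)
      = (1-a) * (if ((0:ℕ):ℤ) ≤ c then pbw l 0 else 0) := by
    by_cases h : ((0:ℕ):ℤ) ≤ c
    · rw [if_pos h, if_pos h]; simp [pbw]
    · rw [if_neg h, if_neg h]; ring
  rw [e2, e1, h0]
  ring

lemma cdfz_sub (l : List ℝ) (c : ℤ) : cdfz l c - cdfz l (c-1) = pbz l c := by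
  unfold cdfz pbz
  rw [← Finset.sum_sub_distrib]
  by_cases hc : 0 ≤ c
  · rw [if_pos hc]
    by_cases hlen : c ≤ (l.length : ℤ)
    · have hmem : c.toNat ∈ Finset.range (l.length + 1) := by
        simp only [Finset.mem_range]; omega
      rw [Finset.sum_eq_single_of_mem c.toNat hmem]
      · rw [if_pos (by omega), if_neg (by omega)]
        simp
      · intro k _ hk
        by_cases h1 : (k:ℤ) ≤ c - 1
        · rw [if_pos (by omega), if_pos h1]; ring
        · have h2 : ¬ ((k:ℤ) ≤ c) := by
            rcases lt_or_ge ((k:ℤ)) c with h | h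
            · exfalso; apply h1; omega
            · intro hh
              have : (k:ℤ) = c := le_antisymm hh h
              apply hk
              omega
          rw [if_neg h2, if_neg h1]; ring
    · have : pbw l c.toNat = 0 := pbw_eq_zero_of_gt l _ (by omega)
      rw [this]
      apply Finset.sum_eq_zero
      intro k hk
      simp only [Finset.mem_range] at hk
      by_cases h1 : (k:ℤ) ≤ c - 1
      · rw [if_pos (by omega), if_pos h1]; ring
      · exfalso; omega
  · rw [if_neg hc]
    apply Finset.sum_eq_zero
    intro k _
    rw [if_neg (by omega), if_neg (by omega)]
    ring

lemma cdfz_two_cons (a b : ℝ) (l : List ℝ) (c : ℤ) :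
    cdfz (a :: b :: l) c
      = cdfz l c + (a+b) * (cdfz l (c-1) - cdfz l c)
        + (a*b) * (cdfz l c - 2 * cdfz l (c-1) + cdfz l (c-2)) := by
  rw [cdfz_cons, cdfz_cons, cdfz_cons]
  have : c - 1 - 1 = c - 2 := by ring
  rw [this]
  ring

lemma cdfz_reflect (l : List ℝ) (c : ℤ) :
    cdfz l c + cdfz (l.map (fun x => 1 - x)) ((l.length:ℤ) - 1 - c) = 1 := by
  unfold cdfz
  rw [List.length_map]
  have hre : ∑ k ∈ Finset.range (l.length + 1),
      (if (k:ℤ) ≤ (l.length:ℤ) - 1 - c then pbw (l.map (fun x => 1 - x)) k else 0)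
      = ∑ k ∈ Finset.range (l.length + 1), (if ¬ ((k:ℤ) ≤ c) then pbw l k else 0) := by
    rw [← Finset.sum_range_reflect
      (fun k => if (k:ℤ) ≤ (l.length:ℤ) - 1 - c then pbw (l.map (fun x => 1 - x)) k else 0)
      (l.length + 1)]
    apply Finset.sum_congr rfl
    intro k hk
    simp only [Finset.mem_range] at hk
    have hsimp : l.length + 1 - 1 - k = l.length - k := by omega
    simp only [hsimp]
    have hkl : k ≤ l.length := by omega
    have hcond : ((l.length - k :ℕ):ℤ) ≤ (l.length:ℤ) - 1 - c ↔ ¬ ((k:ℤ) ≤ c) := by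
      have : ((l.length - k :ℕ):ℤ) = (l.length:ℤ) - (k:ℤ) := by
        push_cast [hkl]; ring
      rw [this]; omega
    by_cases h : ((k:ℤ)) ≤ c
    · rw [if_neg (by rw [hcond]; simp [h]), if_neg (by simp [h])]
    · rw [if_pos (hcond.mpr h), if_pos h]
      exact pbw_reflect l (l.length - k) k (by omega)
  rw [hre, ← Finset.sum_add_distrib]
  rw [← pbw_sum_one l]
  apply Finset.sum_congr rfl
  intro k _
  by_cases h : ((k:ℤ)) ≤ c <;> simp [h]

noncomputable def binCdf (n : ℕ) (x : ℝ) (c : ℤ) : ℝ := cdfz (List.replicate n x) c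
noncomputable def binPmfZ (n : ℕ) (x : ℝ) (c : ℤ) : ℝ := pbz (List.replicate n x) c

lemma binCdf_succ (n : ℕ) (x : ℝ) (c : ℤ) :
    binCdf (n+1) x c = (1-x) * binCdf n x c + x * binCdf n x (c-1) := by
  unfold binCdf
  rw [List.replicate_succ, cdfz_cons]

lemma binCdf_sub (n : ℕ) (x : ℝ) (c : ℤ) :
    binCdf n x c - binCdf n x (c-1) = binPmfZ n x c := cdfz_sub _ _

lemma binCdf_zero (x : ℝ) (c : ℤ) : binCdf 0 x c = if 0 ≤ c then 1 else 0 := by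
  unfold binCdf cdfz
  simp only [List.replicate_zero, List.length_nil]
  rw [Finset.sum_range_one]
  norm_num

lemma binPmfZ_nonneg {n : ℕ} {x : ℝ} (h0 : 0 ≤ x) (h1 : x ≤ 1) (c : ℤ) :
    0 ≤ binPmfZ n x c := by
  unfold binPmfZ pbz
  split
  · rw [pbw_replicate_le]
    have : (0:ℝ) ≤ 1 - x := by linarith
    positivity
  · exact le_refl 0

lemma binPmfZ_succ (n : ℕ) (x : ℝ) (c : ℤ) :
    binPmfZ (n+1) x c = (1-x) * binPmfZ n x c + x * binPmfZ n x (c-1) := by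
  unfold binPmfZ pbz
  rw [List.replicate_succ]
  rcases lt_trichotomy c 0 with h | h | h
  · rw [if_neg (by omega), if_neg (by omega), if_neg (by omega)]; ring
  · subst h
    rw [if_pos le_rfl, if_pos le_rfl, if_neg (by omega)]
    simp
  · rw [if_pos (by omega), if_pos (by omega), if_pos (by omega)]
    have h1 : c.toNat = (c-1).toNat + 1 := by omega
    rw [h1, pbw_cons_succ]

lemma binPmfZ_zero_param (x : ℝ) (c : ℤ) :
    binPmfZ 0 x c = if c = 0 then 1 else 0 := by
  unfold binPmfZ pbz
  rcases lt_trichotomy c 0 with h | h | h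
  · rw [if_neg (by omega), if_neg (by omega)]
  · subst h; norm_num
  · rw [if_pos (by omega), if_neg (by omega)]
    have : c.toNat = (c.toNat - 1) + 1 := by omega
    rw [List.replicate_zero, this, pbw_nil_succ]

lemma deriv_combine (n : ℕ) (x : ℝ) (c : ℤ) :
    (1-x) * (-(n:ℝ) * binPmfZ (n-1) x c) + x * (-(n:ℝ) * binPmfZ (n-1) x (c-1))
      = -(n:ℝ) * binPmfZ n x c := by
  cases n with
  | zero => simp
  | succ m =>
    have : m + 1 - 1 = m := rfl
    rw [this, binPmfZ_succ]
    ring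

lemma hasDerivAt_binCdf (n : ℕ) (c : ℤ) (x : ℝ) :
    HasDerivAt (fun y => binCdf n y c) (-(n:ℝ) * binPmfZ (n-1) x c) x := by
  induction n generalizing c with
  | zero =>
    have hf : (fun y => binCdf 0 y c) = fun _ => (if 0 ≤ c then (1:ℝ) else 0) := by
      funext y; exact binCdf_zero y c
    rw [hf]
    simpa using hasDerivAt_const x (if 0 ≤ c then (1:ℝ) else 0)
  | succ m ih =>
    have hf : (fun y => binCdf (m+1) y c)
        = fun y => (1-y) * binCdf m y c + y * binCdf m y (c-1) := by
      funext y; exact binCdf_succ m y c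
    rw [hf]
    have h1 : HasDerivAt (fun y : ℝ => 1 - y) (-1) x := by
      simpa using (hasDerivAt_id x).const_sub (1:ℝ)
    have hF := ih c
    have hG := ih (c-1)
    have hA := h1.mul hF
    have hB := (hasDerivAt_id x).mul hG
    have hsum := hA.add hB
    have heq : (-1) * binCdf m x c + (1 - x) * (-(m:ℝ) * binPmfZ (m-1) x c)
        + ((1 : ℝ) * binCdf m x (c-1) + x * (-(m:ℝ) * binPmfZ (m-1) x (c-1)))
        = -((m:ℝ)+1) * binPmfZ m x c := by
      have hc := binCdf_sub m x c
      have hd := deriv_combine m x c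
      linarith [hc, hd]
    simp only [id_eq] at hsum
    rw [heq] at hsum
    have hcast : -(((m+1:ℕ)):ℝ) * binPmfZ (m+1-1) x c = -((m:ℝ)+1) * binPmfZ m x c := by
      norm_num
    rw [hcast]
    exact hsum

lemma binPmfZ_dec {n : ℕ} {x : ℝ} {c : ℤ} (h0 : 0 ≤ x) (h1 : x ≤ 1)
    (hc1 : 1 ≤ c) (hcx : ((n:ℝ)+1) * x ≤ (c:ℝ)) :
    binPmfZ n x c ≤ binPmfZ n x (c-1) := by
  unfold binPmfZ pbz
  rw [if_pos (by omega), if_pos (by omega)]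
  rw [pbw_replicate_le, pbw_replicate_le]
  obtain ⟨j, hj⟩ : ∃ j, c.toNat = j + 1 := ⟨c.toNat - 1, by omega⟩
  have hkm : (c-1).toNat = j := by omega
  rw [hj, hkm]
  have hck : ((j:ℝ)) + 1 = (c:ℝ) := by
    have : ((j:ℤ)) + 1 = c := by omega
    exact_mod_cast congrArg (fun z : ℤ => (z:ℝ)) this
  have h1x : (0:ℝ) ≤ 1 - x := by linarith
  rcases le_or_gt (j+1) n with hkn | hkn
  · -- main case j + 1 ≤ n
    have e1 : n - j = (n - (j+1)) + 1 := by omega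
    rw [e1, pow_succ, pow_succ]
    have key : (n.choose (j+1) : ℝ) * x ≤ (n.choose j : ℝ) * (1-x) := by
      have hid := Nat.choose_succ_right_eq n j
      have hidR : (n.choose (j+1) : ℝ) * ((j:ℝ)+1) = (n.choose j : ℝ) * ((n:ℝ) - j) := by
        have := congrArg (fun m : ℕ => (m:ℝ)) hid
        push_cast at this
        have e4 : ((n - j : ℕ) : ℝ) = (n:ℝ) - (j:ℝ) := by
          have : j ≤ n := by omega
          push_cast [this]; ring
        rw [e4] at this
        linarith [this]
      have hx2 : ((n:ℝ) - j) * x ≤ ((j:ℝ)+1) * (1-x) := by nlinarith [hcx, hck]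
      have hkpos : (0:ℝ) < (j:ℝ) + 1 := by positivity
      have hnn : (0:ℝ) ≤ (n.choose j : ℝ) := by positivity
      nlinarith [hidR, hx2, hnn, hkpos]
    have hnn2 : (0:ℝ) ≤ x^j * (1-x)^(n-(j+1)) := by positivity
    nlinarith [key, hnn2]
  · -- j + 1 > n : LHS zero
    have hz : n.choose (j+1) = 0 := Nat.choose_eq_zero_of_lt hkn
    rw [hz]
    simp only [Nat.cast_zero, zero_mul]
    positivity

lemma pbw_replicate_zero (n : ℕ) : ∀ k, pbw (List.replicate n (0:ℝ)) k = pbw [] k := by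
  induction n with
  | zero => intro k; rfl
  | succ m ih =>
    intro k
    rw [List.replicate_succ]
    cases k with
    | zero => rw [pbw_cons_zero, ih 0]; norm_num
    | succ k => rw [pbw_cons_succ, ih k, ih (k+1)]; norm_num

lemma binCdf_zero_param (n : ℕ) (c : ℤ) (hc : 0 ≤ c) : binCdf n (0:ℝ) c = 1 := by
  unfold binCdf cdfz
  rw [List.length_replicate]
  have hcong : ∀ k ∈ Finset.range (n+1),
      (if (k:ℤ) ≤ c then pbw (List.replicate n (0:ℝ)) k else 0)
      = if k = 0 then 1 else 0 := by
    intro k _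
    rw [pbw_replicate_zero]
    cases k with
    | zero => rw [if_pos (by omega), if_pos rfl, pbw_nil_zero]
    | succ k =>
      rw [pbw_nil_succ]
      simp
  rw [Finset.sum_congr rfl hcong]
  rw [Finset.sum_ite_eq' (Finset.range (n+1)) 0 (fun _ => (1:ℝ))]
  rw [if_pos (by simp)]

/-- The interpolation function ψ. `m` plays the role of `n-1`. -/
noncomputable def psiF (m : ℕ) (μ : ℝ) (c : ℤ) (q : ℝ) : ℝ :=
  (1-q) * binCdf m ((μ - q)/m) c + q * binCdf m ((μ - q)/m) (c-1)

lemma hasDerivAt_psiF (m : ℕ) (hm : 1 ≤ m) (μ : ℝ) (c : ℤ) (q : ℝ) :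
    HasDerivAt (psiF m μ c)
      ((q - (μ - q)/m) * (binPmfZ (m-1) ((μ - q)/m) (c-1) - binPmfZ (m-1) ((μ - q)/m) c)) q := by
  have hm0 : ((m:ℝ)) ≠ 0 := by positivity
  set y := (μ - q)/m with hy
  have hs' : HasDerivAt (fun q : ℝ => (μ - q)/m) (-1/m) q := by
    have h1 : HasDerivAt (fun q : ℝ => μ - q) (-1) q := by
      simpa using (hasDerivAt_id q).const_sub μ
    simpa using h1.div_const m
  have hF : HasDerivAt (fun q : ℝ => binCdf m ((μ - q)/m) c)
      ((-(m:ℝ) * binPmfZ (m-1) y c) * (-1/m)) q :=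
    by have := (hasDerivAt_binCdf m c y).comp q hs'; exact this
  have hG : HasDerivAt (fun q : ℝ => binCdf m ((μ - q)/m) (c-1))
      ((-(m:ℝ) * binPmfZ (m-1) y (c-1)) * (-1/m)) q :=
    by have := (hasDerivAt_binCdf m (c-1) y).comp q hs'; exact this
  have h1 : HasDerivAt (fun q : ℝ => 1 - q) (-1) q := by
    simpa using (hasDerivAt_id q).const_sub (1:ℝ)
  have hA := h1.mul hF
  have hB := (hasDerivAt_id q).mul hG
  have hsum := hA.add hB
  simp only [id_eq] at hsum
  have hFv : (-1 : ℝ) * binCdf m y c + (1 - q) * ((-(m:ℝ) * binPmfZ (m-1) y c) * (-1/m))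
      + ((1:ℝ) * binCdf m y (c-1) + q * ((-(m:ℝ) * binPmfZ (m-1) y (c-1)) * (-1/m)))
      = (q - y) * (binPmfZ (m-1) y (c-1) - binPmfZ (m-1) y c) := by
    have hc : binCdf m y c - binCdf m y (c-1) = binPmfZ m y c := binCdf_sub m y c
    obtain ⟨m', rfl⟩ : ∃ m', m = m' + 1 := ⟨m - 1, by omega⟩
    have hrec : binPmfZ (m'+1) y c = (1-y) * binPmfZ m' y c + y * binPmfZ m' y (c-1) :=
      binPmfZ_succ m' y c
    rw [show m' + 1 - 1 = m' from rfl]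
    have hmm : ((m' + 1 : ℕ) : ℝ) = (m' : ℝ) + 1 := by push_cast; ring
    field_simp [hmm] at *
    nlinarith [hc, hrec]
  have hfun : psiF m μ c = fun q : ℝ =>
      (1 - q) * binCdf m ((μ - q)/m) c + q * binCdf m ((μ - q)/m) (c-1) := rfl
  rw [hfun]
  rw [hFv] at hsum
  exact hsum

lemma psiF_at_s (n : ℕ) (hn : 2 ≤ n) (μ : ℝ) (c : ℤ) :
    psiF (n-1) μ c (μ/n) = binCdf n (μ/n) c := by
  have hn1 : (1:ℝ) < (n:ℝ) := by
    have : (2:ℝ) ≤ (n:ℝ) := by exact_mod_cast hn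
    linarith
  have hcast : (((n-1:ℕ)):ℝ) = (n:ℝ) - 1 := by
    push_cast [show 1 ≤ n by omega]; ring
  have hne : (n:ℝ) - 1 ≠ 0 := by linarith
  have hstep : μ - μ/n = μ/n * ((n:ℝ)-1) := by
    field_simp
  have hy : (μ - μ/n)/(((n-1:ℕ)):ℝ) = μ/n := by
    rw [hcast, hstep, mul_div_cancel_right₀ _ hne]
  unfold psiF
  rw [hy]
  obtain ⟨m, rfl⟩ : ∃ m, n = m + 1 := ⟨n - 1, by omega⟩
  rw [show (m + 1 - 1) = m from rfl]
  rw [binCdf_succ]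

lemma psiF_cont (m : ℕ) (hm : 1 ≤ m) (μ : ℝ) (c : ℤ) : Continuous (psiF m μ c) := by
  have : Differentiable ℝ (psiF m μ c) := fun q =>
    (hasDerivAt_psiF m hm μ c q).differentiableAt
  exact this.continuous

lemma psi0 (n : ℕ) (hn : 2 ≤ n) (μ : ℝ) (hμ0 : 0 ≤ μ) (hμn : μ ≤ ((n-1:ℕ):ℝ))
    (c : ℤ) (hc : μ ≤ (c:ℝ)) :
    binCdf n (μ/n) c ≤ binCdf (n-1) (μ/((n-1:ℕ):ℝ)) c := by
  have hn1 : (1:ℝ) < (n:ℝ) := by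
    have : (2:ℝ) ≤ (n:ℝ) := by exact_mod_cast hn
    linarith
  have hcast : (((n-1:ℕ)):ℝ) = (n:ℝ) - 1 := by push_cast [show 1 ≤ n by omega]; ring
  rcases eq_or_lt_of_le hμ0 with hμz | hμpos
  · -- μ = 0
    have hc0 : (0:ℤ) ≤ c := by
      have : (0:ℝ) ≤ (c:ℝ) := by linarith
      exact_mod_cast this
    rw [← hμz]
    norm_num
    rw [binCdf_zero_param n c hc0, binCdf_zero_param (n-1) c hc0]
  · have hm : 1 ≤ n - 1 := by omega
    have hs_pos : 0 < μ/n := by positivity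
    have hc1 : (1:ℤ) ≤ c := by
      have h1 : (0:ℝ) < (c:ℝ) := lt_of_lt_of_le hμpos hc
      have : (0:ℤ) < c := by exact_mod_cast h1
      omega
    have hanti : AntitoneOn (psiF (n-1) μ c) (Set.Icc 0 (μ/n)) := by
      apply antitoneOn_of_deriv_nonpos (convex_Icc 0 (μ/n))
      · exact (psiF_cont (n-1) hm μ c).continuousOn
      · intro q _
        exact ((hasDerivAt_psiF (n-1) hm μ c q).differentiableAt).differentiableWithinAt
      · intro q hq
        rw [interior_Icc] at hq
        rw [(hasDerivAt_psiF (n-1) hm μ c q).deriv]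
        set y := (μ - q)/((n-1:ℕ):ℝ) with hy
        have hq0 : 0 < q := hq.1
        have hqs : q < μ/n := hq.2
        have hy0 : 0 ≤ y := by
          rw [hy, hcast]
          apply div_nonneg _ (by linarith)
          have : μ/n ≤ μ := by
            rw [div_le_iff₀ (by linarith)]
            nlinarith
          linarith
        have hy1 : y ≤ 1 := by
          rw [hy, hcast, div_le_one (by linarith)]
          linarith
        have hqy : q - y < 0 := by
          rw [hy, hcast]
          rw [sub_neg, lt_div_iff₀ (by linarith)]
          have : q * (n:ℝ) < μ := by
            rw [lt_div_iff₀ (by linarith)] at hqs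
            linarith
          nlinarith
        have hfac : 0 ≤ binPmfZ (n-1-1) y (c-1) - binPmfZ (n-1-1) y c := by
          rw [sub_nonneg]
          apply binPmfZ_dec hy0 hy1 hc1
          have hcastm : (((n-1-1:ℕ)):ℝ) = (n:ℝ) - 2 := by
            have e : n - 1 - 1 = n - 2 := by omega
            rw [e]
            push_cast [show 2 ≤ n from hn]
            ring
          rw [hcastm, hy, hcast]
          have e2 : (n:ℝ) - 2 + 1 = (n:ℝ) - 1 := by ring
          have hyv : ((n:ℝ) - 2 + 1) * ((μ - q)/((n:ℝ)-1)) = μ - q := by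
            rw [e2, mul_div_assoc', mul_div_cancel_left₀ _ (by linarith : (n:ℝ) - 1 ≠ 0)]
          rw [hyv]
          linarith
        nlinarith [hqy, hfac]
    have h0mem : (0:ℝ) ∈ Set.Icc 0 (μ/n) := ⟨le_refl 0, by positivity⟩
    have hsmem : (μ/n) ∈ Set.Icc 0 (μ/n) := ⟨by positivity, le_refl _⟩
    have := hanti h0mem hsmem (le_of_lt hs_pos)
    rw [psiF_at_s n hn μ c] at this
    calc binCdf n (μ/n) c ≤ psiF (n-1) μ c 0 := this
      _ = binCdf (n-1) (μ/((n-1:ℕ):ℝ)) c := by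
          unfold psiF
          norm_num

lemma psi1 (n : ℕ) (hn : 2 ≤ n) (μ : ℝ) (hμ1 : 1 ≤ μ) (hμn : μ ≤ (n:ℝ))
    (c : ℤ) (hc : μ ≤ (c:ℝ)) :
    binCdf n (μ/n) c ≤ binCdf (n-1) ((μ-1)/((n-1:ℕ):ℝ)) (c-1) := by
  have hn1 : (1:ℝ) < (n:ℝ) := by
    have : (2:ℝ) ≤ (n:ℝ) := by exact_mod_cast hn
    linarith
  have hcast : (((n-1:ℕ)):ℝ) = (n:ℝ) - 1 := by push_cast [show 1 ≤ n by omega]; ring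
  have hm : 1 ≤ n - 1 := by omega
  have hs1 : μ/n ≤ 1 := by
    rw [div_le_one (by linarith)]
    linarith
  have hc1 : (1:ℤ) ≤ c := by
    have h1 : (1:ℝ) ≤ (c:ℝ) := le_trans hμ1 hc
    exact_mod_cast h1
  have hmono : MonotoneOn (psiF (n-1) μ c) (Set.Icc (μ/n) 1) := by
    apply monotoneOn_of_deriv_nonneg (convex_Icc (μ/n) 1)
    · exact (psiF_cont (n-1) hm μ c).continuousOn
    · intro q _
      exact ((hasDerivAt_psiF (n-1) hm μ c q).differentiableAt).differentiableWithinAt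
    · intro q hq
      rw [interior_Icc] at hq
      rw [(hasDerivAt_psiF (n-1) hm μ c q).deriv]
      set y := (μ - q)/((n-1:ℕ):ℝ) with hy
      have hqs : μ/n < q := hq.1
      have hq1 : q < 1 := hq.2
      have hq0 : 0 < q := by
        have : 0 < μ/n := by positivity
        linarith
      have hy0 : 0 ≤ y := by
        rw [hy, hcast]
        apply div_nonneg _ (by linarith)
        linarith
      have hy1 : y ≤ 1 := by
        rw [hy, hcast, div_le_one (by linarith)]
        have : μ < q * n := by
          rw [div_lt_iff₀ (by linarith)] at hqs
          linarith
        nlinarith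
      have hqy : 0 < q - y := by
        rw [hy, hcast]
        rw [sub_pos, div_lt_iff₀ (by linarith)]
        have : μ < q * n := by
          rw [div_lt_iff₀ (by linarith)] at hqs
          linarith
        nlinarith
      have hfac : 0 ≤ binPmfZ (n-1-1) y (c-1) - binPmfZ (n-1-1) y c := by
        rw [sub_nonneg]
        apply binPmfZ_dec hy0 hy1 hc1
        have hcastm : (((n-1-1:ℕ)):ℝ) = (n:ℝ) - 2 := by
          have e : n - 1 - 1 = n - 2 := by omega
          rw [e]
          push_cast [show 2 ≤ n from hn]
          ring
        rw [hcastm, hy, hcast]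
        have e2 : (n:ℝ) - 2 + 1 = (n:ℝ) - 1 := by ring
        have hyv : ((n:ℝ) - 2 + 1) * ((μ - q)/((n:ℝ)-1)) = μ - q := by
          rw [e2, mul_div_assoc', mul_div_cancel_left₀ _ (by linarith : (n:ℝ) - 1 ≠ 0)]
        rw [hyv]
        linarith
      nlinarith [hqy, hfac]
  have hsmem : (μ/n) ∈ Set.Icc (μ/n) 1 := ⟨le_refl _, hs1⟩
  have h1mem : (1:ℝ) ∈ Set.Icc (μ/n) 1 := ⟨hs1, le_refl 1⟩
  have := hmono hsmem h1mem hs1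
  rw [psiF_at_s n hn μ c] at this
  calc binCdf n (μ/n) c ≤ psiF (n-1) μ c 1 := this
    _ = binCdf (n-1) ((μ-1)/((n-1:ℕ):ℝ)) (c-1) := by
        unfold psiF
        norm_num

open Classical in
noncomputable def cntS (l : List ℝ) (s : ℝ) : ℕ := l.countP (fun x => decide (x ≠ s))

open Classical in
lemma cntS_cons (x : ℝ) (l : List ℝ) (s : ℝ) :
    cntS (x :: l) s = cntS l s + if x ≠ s then 1 else 0 := by
  unfold cntS
  rw [List.countP_cons]
  simp

open Classical in
lemma cntS_perm {l l' : List ℝ} (h : l.Perm l') (s : ℝ) : cntS l s = cntS l' s :=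
  h.countP_eq _

open Classical in
lemma cntS_pos {l : List ℝ} {s : ℝ} (h : ∃ x ∈ l, x ≠ s) : 0 < cntS l s := by
  unfold cntS
  rw [List.countP_pos_iff]
  obtain ⟨x, hx, hxs⟩ := h
  exact ⟨x, hx, by simpa using hxs⟩

lemma cntS_le_length (l : List ℝ) (s : ℝ) : cntS l s ≤ l.length :=
  List.countP_le_length

-- list helpers
lemma list_exists_max : ∀ (l : List ℝ), l ≠ [] → ∃ a ∈ l, ∀ x ∈ l, x ≤ a := by
  intro l
  induction l with
  | nil => intro h; exact absurd rfl h
  | cons a l ih =>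
    intro _
    rcases eq_or_ne l [] with rfl | hne
    · exact ⟨a, by simp, by simp⟩
    · obtain ⟨m, hm_mem, hm_max⟩ := ih hne
      rcases le_total a m with h | h
      · exact ⟨m, by simp [hm_mem], by
          intro x hx
          rcases List.mem_cons.mp hx with rfl | hx
          · exact h
          · exact hm_max x hx⟩
      · exact ⟨a, by simp, by
          intro x hx
          rcases List.mem_cons.mp hx with rfl | hx
          · exact le_refl x
          · exact le_trans (hm_max x hx) h⟩

lemma list_exists_min : ∀ (l : List ℝ), l ≠ [] → ∃ a ∈ l, ∀ x ∈ l, a ≤ x := by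
  intro l
  induction l with
  | nil => intro h; exact absurd rfl h
  | cons a l ih =>
    intro _
    rcases eq_or_ne l [] with rfl | hne
    · exact ⟨a, by simp, by simp⟩
    · obtain ⟨m, hm_mem, hm_min⟩ := ih hne
      rcases le_total m a with h | h
      · exact ⟨m, by simp [hm_mem], by
          intro x hx
          rcases List.mem_cons.mp hx with rfl | hx
          · exact h
          · exact hm_min x hx⟩
      · exact ⟨a, by simp, by
          intro x hx
          rcases List.mem_cons.mp hx with rfl | hx
          · exact le_refl x
          · exact le_trans h (hm_min x hx)⟩

lemma list_sum_le (l : List ℝ) (M : ℝ) (h : ∀ x ∈ l, x ≤ M) :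
    l.sum ≤ l.length * M := by
  induction l with
  | nil => simp
  | cons a l ih =>
    have ha := h a (by simp)
    have ihh := ih (fun x hx => h x (List.mem_cons_of_mem _ hx))
    simp only [List.sum_cons, List.length_cons]
    push_cast
    nlinarith [ha, ihh]

lemma list_le_sum (l : List ℝ) (M : ℝ) (h : ∀ x ∈ l, M ≤ x) :
    l.length * M ≤ l.sum := by
  induction l with
  | nil => simp
  | cons a l ih =>
    have ha := h a (by simp)
    have ihh := ih (fun x hx => h x (List.mem_cons_of_mem _ hx))
    simp only [List.sum_cons, List.length_cons]
    push_cast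
    nlinarith [ha, ihh]

lemma list_sum_nonneg (l : List ℝ) (h : ∀ x ∈ l, (0:ℝ) ≤ x) : 0 ≤ l.sum := by
  have := list_le_sum l 0 h
  simpa using this

set_option maxHeartbeats 1000000 in
/-- The key tail inequality for Poisson binomial vs binomial. -/
theorem main (N : ℕ) : ∀ (l : List ℝ), (∀ x ∈ l, 0 ≤ x ∧ x ≤ 1) →
    l.length * (l.length + 1) + cntS l (l.sum / l.length) ≤ N →
    ∀ c : ℤ, l.sum ≤ (c:ℝ) → binCdf l.length (l.sum / l.length) c ≤ cdfz l c := by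
  induction N with
  | zero =>
    intro l hl hm c hc
    have hlen : l.length = 0 := by nlinarith [hm, Nat.zero_le (cntS l (l.sum / l.length))]
    have : l = [] := List.length_eq_zero_iff.mp hlen
    subst this
    simp only [List.length_nil, List.sum_nil]
    exact le_of_eq rfl
  | succ N ih =>
    intro l hl hm c hc
    set n := l.length with hn
    set s := l.sum / l.length with hs
    by_cases hall : ∀ x ∈ l, x = s
    · -- l is constant: equality
      have hrep : l = List.replicate n s := by
        apply List.eq_replicate_iff.mpr
        exact ⟨hn.symm ▸ rfl, hall⟩
      unfold binCdf
      rw [← hrep]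
    · push_neg at hall
      have hcnt_pos : 0 < cntS l s := cntS_pos hall
      have hlne : l ≠ [] := by
        intro h
        obtain ⟨x, hx, _⟩ := hall
        rw [h] at hx
        exact absurd hx List.not_mem_nil
      have hn1 : 1 ≤ n := by
        rw [hn]
        exact List.length_pos_iff.mpr hlne
      -- sum facts
      have hsum_nonneg : 0 ≤ l.sum := list_sum_nonneg l (fun x hx => (hl x hx).1)
      have hsum_le : l.sum ≤ (n:ℝ) := by
        have := list_sum_le l 1 (fun x hx => (hl x hx).2)
        simpa using this
      have hnR : (0:ℝ) < (n:ℝ) := by exact_mod_cast hn1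
      have hsum_eq : l.sum = (n:ℝ) * s := by
        rw [hs, hn]
        field_simp
        exact (mul_div_cancel_right₀ _ (ne_of_gt hnR)).symm
      have hseq : l.sum / (n:ℝ) = s := by
        rw [hs, hn]
      have hs0 : 0 ≤ s := by
        rw [hs]
        positivity
      have hs1 : s ≤ 1 := by
        rw [hs, div_le_one hnR]
        exact hsum_le
      -- extract max and min
      obtain ⟨a, ha_mem, ha_max⟩ := list_exists_max l hlne
      set l₁ := l.erase a with hl₁
      have perm1 : l.Perm (a :: l₁) := List.perm_cons_erase ha_mem
      have hl₁len : l₁.length = n - 1 := by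
        rw [hl₁, List.length_erase_of_mem ha_mem, hn]
      have hl₁sub : ∀ x ∈ l₁, x ∈ l := fun x hx => List.mem_of_mem_erase hx
      -- a > s
      have ha_gt : s < a := by
        rcases lt_or_ge s a with h | h
        · exact h
        · exfalso
          have hall2 : ∀ x ∈ l, x = s := by
            intro x hx
            by_contra hxs
            -- all x ≤ a ≤ s; strict somewhere gives sum < n * s
            have hxlt : x < s := lt_of_le_of_ne (le_trans (ha_max x hx) h) hxs
            -- sum over l: decompose l ~ x :: l.erase x
            have permx : l.Perm (x :: l.erase x) := List.perm_cons_erase hx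
            have hsum2 : l.sum = x + (l.erase x).sum := by
              rw [permx.sum_eq]
              simp
            have hbound : (l.erase x).sum ≤ ((l.erase x).length : ℝ) * s := by
              apply list_sum_le
              intro y hy
              exact le_trans (ha_max y (List.mem_of_mem_erase hy)) h
            have hlenx : (l.erase x).length = n - 1 := by
              rw [List.length_erase_of_mem hx, hn]
            have hcast : (((n-1:ℕ)):ℝ) = (n:ℝ) - 1 := by push_cast [hn1]; ring
            rw [hlenx, hcast] at hbound
            nlinarith [hsum_eq, hsum2, hbound, hxlt]
          obtain ⟨x, hx, hxs⟩ := hall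
          exact hxs (hall2 x hx)
      -- n ≥ 2
      have hn2 : 2 ≤ n := by
        rcases Nat.lt_or_ge n 2 with h | h
        · exfalso
          have hn1' : n = 1 := by omega
          -- single element: a = sum = s
          have hsa : l.sum = a := by
            have h2 : l₁.length = 0 := by omega
            have h3 : l₁ = [] := List.length_eq_zero_iff.mp h2
            have h4 := perm1.sum_eq
            rw [h3] at h4
            simpa using h4
          have hcast1 : ((l.length : ℕ) : ℝ) = 1 := by
            rw [← hn, hn1']
            norm_num
          have : a = s := by
            rw [hs, hsa, hcast1]
            norm_num
          linarith
        · exact h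
      have hl₁ne : l₁ ≠ [] := by
        intro h
        rw [h] at hl₁len
        simp at hl₁len
        omega
      obtain ⟨b, hb_mem, hb_min⟩ := list_exists_min l₁ hl₁ne
      set rest := l₁.erase b with hrest
      have perm2 : l₁.Perm (b :: rest) := List.perm_cons_erase hb_mem
      have perm : l.Perm (a :: b :: rest) := perm1.trans (List.Perm.cons a perm2)
      have hrest_len : rest.length = n - 2 := by
        rw [hrest, List.length_erase_of_mem hb_mem, hl₁len]
        omega
      have hrest_sub : ∀ x ∈ rest, x ∈ l :=
        fun x hx => hl₁sub x (List.mem_of_mem_erase hx)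
      have hrest_bd : ∀ x ∈ rest, 0 ≤ x ∧ x ≤ 1 := fun x hx => hl x (hrest_sub x hx)
      have ha_bd := hl a ha_mem
      have hb_bd := hl b (hl₁sub b hb_mem)
      have hsum_dec : l.sum = a + b + rest.sum := by
        rw [perm.sum_eq]
        simp only [List.sum_cons]
        ring
      -- b < s
      have hb_lt : b < s := by
        have hb1 : (l₁.length : ℝ) * b ≤ l₁.sum := list_le_sum l₁ b hb_min
        have hl₁sum : l₁.sum = l.sum - a := by
          have := perm1.sum_eq
          simp only [List.sum_cons] at this
          linarith
        have hcast : ((l₁.length:ℕ):ℝ) = (n:ℝ) - 1 := by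
          rw [hl₁len]
          push_cast [hn1]
          ring
        rw [hl₁sum, hcast] at hb1
        nlinarith [hsum_eq, ha_gt, hb1, hnR]
      set t := a + b with ht
      set B := cdfz rest c - 2 * cdfz rest (c-1) + cdfz rest (c-2) with hB
      have hexp : ∀ x y : ℝ, cdfz (x :: y :: rest) c
          = cdfz rest c + (x+y) * (cdfz rest (c-1) - cdfz rest c) + (x*y) * B := by
        intro x y
        rw [cdfz_two_cons]
      have hmain_perm : cdfz l c = cdfz (a :: b :: rest) c := cdfz_perm perm c
      by_cases hBle : B ≤ 0
      · -- Case 1: pin to (s, t-s)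
        set l' := s :: (t - s) :: rest with hl'
        have hts_lb : b ≤ t - s := by linarith [ha_gt]
        have hts_ub : t - s ≤ a := by linarith [hb_lt]
        have hl'_bd : ∀ x ∈ l', 0 ≤ x ∧ x ≤ 1 := by
          intro x hx
          rw [hl'] at hx
          rcases List.mem_cons.mp hx with rfl | hx
          · exact ⟨hs0, hs1⟩
          · rcases List.mem_cons.mp hx with rfl | hx
            · exact ⟨le_trans hb_bd.1 hts_lb, le_trans hts_ub ha_bd.2⟩
            · exact hrest_bd x hx
        have hl'_len : l'.length = n := by
          rw [hl']
          simp only [List.length_cons]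
          omega
        have hl'_sum : l'.sum = l.sum := by
          rw [hl']
          simp only [List.sum_cons]
          rw [hsum_dec]
          ring
        have hcomp : cdfz l' c ≤ cdfz l c := by
          rw [hmain_perm, hl', hexp a b, hexp s (t-s)]
          have he2 : a * b ≤ s * (t-s) := by nlinarith [ha_gt, hb_lt]
          have hst : s + (t - s) = a + b := by ring
          rw [hst]
          have hmul : (s * (t-s)) * B ≤ (a * b) * B :=
            mul_le_mul_of_nonpos_right he2 hBle
          linarith [hmul]
        -- measure decreases
        have hcnt' : cntS l' s + 1 ≤ cntS l s := by
          have hane : a ≠ s := ne_of_gt ha_gt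
          have hbne : b ≠ s := ne_of_lt hb_lt
          have hR : cntS l s = cntS rest s + 1 + 1 := by
            rw [cntS_perm perm s, cntS_cons, cntS_cons, if_pos hane, if_pos hbne]
          have hL : cntS l' s = cntS rest s + (if (t-s) ≠ s then 1 else 0) := by
            rw [hl', cntS_cons, cntS_cons, if_neg (fun hh : s ≠ s => hh rfl)]
            omega
          rw [hL, hR]
          split <;> omega
        have hIH := ih l' hl'_bd (by
            have hcnteq : cntS l' (l'.sum / l'.length) = cntS l' s := by
              rw [hl'_sum, hl'_len, hseq]
            rw [hcnteq, hl'_len]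
            linarith [hm, hcnt'])
          c (by rw [hl'_sum]; exact hc)
        rw [hl'_len, hl'_sum, hseq] at hIH
        exact le_trans hIH hcomp
      · -- Case 2: B > 0, drop a coordinate
        push_neg at hBle
        rcases le_or_gt t 1 with ht1 | ht1
        · -- t ≤ 1 : compare with (0, t)
          have hcomp : cdfz ((0:ℝ) :: t :: rest) c ≤ cdfz l c := by
            rw [hmain_perm, hexp a b, hexp 0 t]
            have hzt : (0:ℝ) + t = a + b := by ring
            rw [hzt]
            have hmul : (0:ℝ) ≤ (a*b) * B :=
              mul_nonneg (mul_nonneg ha_bd.1 hb_bd.1) (le_of_lt hBle)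
            have hzz : ((0:ℝ) * t) * B = 0 := by ring
            linarith [hmul, hzz]
          have hdrop : cdfz ((0:ℝ) :: t :: rest) c = cdfz (t :: rest) c := by
            rw [cdfz_cons]
            norm_num
          set l'' := t :: rest with hl''
          have hl''_bd : ∀ x ∈ l'', 0 ≤ x ∧ x ≤ 1 := by
            intro x hx
            rcases List.mem_cons.mp hx with rfl | hx
            · exact ⟨by linarith [ha_bd.1, hb_bd.1], ht1⟩
            · exact hrest_bd x hx
          have hl''_len : l''.length = n - 1 := by
            rw [hl'']
            simp only [List.length_cons]
            omega
          have hl''_sum : l''.sum = l.sum := by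
            rw [hl'']
            simp only [List.sum_cons]
            rw [hsum_dec]
          have hIH := ih l'' hl''_bd (by
              obtain ⟨m2, hm2⟩ : ∃ m2, n = m2 + 2 := ⟨n - 2, by omega⟩
              have e1 : n - 1 = m2 + 1 := by omega
              rw [hl''_len, e1]
              have h1 := cntS_le_length l'' (l''.sum / l''.length)
              rw [hl''_len, e1] at h1
              rw [hm2] at hm
              nlinarith [hm, hcnt_pos, h1])
            c (by rw [hl''_sum]; exact hc)
          rw [hl''_len, hl''_sum] at hIH
          have hψ : binCdf n (l.sum/n) c ≤ binCdf (n-1) (l.sum/((n-1:ℕ):ℝ)) c := by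
            apply psi0 n hn2 l.sum hsum_nonneg _ c hc
            · -- l.sum ≤ n - 1
              have := list_sum_le l'' 1 (fun x hx => (hl''_bd x hx).2)
              rw [hl''_sum, hl''_len] at this
              simpa using this
          calc binCdf n s c = binCdf n (l.sum/n) c := by rw [← hseq]
            _ ≤ binCdf (n-1) (l.sum/((n-1:ℕ):ℝ)) c := hψ
            _ ≤ cdfz l'' c := hIH
            _ = cdfz ((0:ℝ) :: t :: rest) c := hdrop.symm
            _ ≤ cdfz l c := hcomp
        · -- t > 1 : compare with (1, t-1)
          have hcomp : cdfz ((1:ℝ) :: (t-1) :: rest) c ≤ cdfz l c := by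
            rw [hmain_perm, hexp a b, hexp 1 (t-1)]
            have hot : (1:ℝ) + (t-1) = a + b := by ring
            rw [hot]
            have hle2 : 1 * (t - 1) ≤ a * b := by nlinarith [ha_bd.2, hb_bd.2]
            have hmul : (1 * (t-1)) * B ≤ (a*b) * B :=
              mul_le_mul_of_nonneg_right hle2 (le_of_lt hBle)
            linarith [hmul]
          have hdrop : cdfz ((1:ℝ) :: (t-1) :: rest) c = cdfz ((t-1) :: rest) (c-1) := by
            rw [cdfz_cons]
            norm_num
          set l'' := (t-1) :: rest with hl''
          have hl''_bd : ∀ x ∈ l'', 0 ≤ x ∧ x ≤ 1 := by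
            intro x hx
            rcases List.mem_cons.mp hx with rfl | hx
            · constructor
              · linarith
              · nlinarith [ha_bd.2, hb_bd.2, ha_bd.1, hb_bd.1]
            · exact hrest_bd x hx
          have hl''_len : l''.length = n - 1 := by
            rw [hl'']
            simp only [List.length_cons]
            omega
          have hl''_sum : l''.sum = l.sum - 1 := by
            rw [hl'']
            simp only [List.sum_cons]
            rw [hsum_dec]
            ring
          have hIH := ih l'' hl''_bd (by
              obtain ⟨m2, hm2⟩ : ∃ m2, n = m2 + 2 := ⟨n - 2, by omega⟩
              have e1 : n - 1 = m2 + 1 := by omega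
              rw [hl''_len, e1]
              have h1 := cntS_le_length l'' (l''.sum / l''.length)
              rw [hl''_len, e1] at h1
              rw [hm2] at hm
              nlinarith [hm, hcnt_pos, h1])
            (c-1) (by
              rw [hl''_sum]
              push_cast
              linarith)
          rw [hl''_len, hl''_sum] at hIH
          have hμ1 : 1 ≤ l.sum := by
            have : 0 ≤ rest.sum := list_sum_nonneg rest (fun x hx => (hrest_bd x hx).1)
            rw [hsum_dec]
            linarith
          have hψ : binCdf n (l.sum/n) c ≤ binCdf (n-1) ((l.sum-1)/((n-1:ℕ):ℝ)) (c-1) :=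
            psi1 n hn2 l.sum hμ1 hsum_le c hc
          calc binCdf n s c = binCdf n (l.sum/n) c := by rw [← hseq]
            _ ≤ binCdf (n-1) ((l.sum-1)/((n-1:ℕ):ℝ)) (c-1) := hψ
            _ ≤ cdfz l'' (c-1) := hIH
            _ = cdfz ((1:ℝ) :: (t-1) :: rest) c := hdrop.symm
            _ ≤ cdfz l c := hcomp
  


/-- real-rooted factorization -/
lemma exists_factor : ∀ (n : ℕ) (p : Polynomial ℝ), p ≠ 0 → p.natDegree = n →
    (∀ z : ℂ, Polynomial.aeval z p = 0 → z.im = 0) →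
    ∃ l : List ℝ, l.length = n ∧
      p = Polynomial.C p.leadingCoeff * (l.map (fun r => Polynomial.X - Polynomial.C r)).prod := by
  intro n
  induction n with
  | zero =>
    intro p hp hdeg _
    refine ⟨[], rfl, ?_⟩
    have hC := Polynomial.eq_C_of_natDegree_eq_zero hdeg
    rw [List.map_nil, List.prod_nil, mul_one, Polynomial.leadingCoeff, hdeg]
    exact hC
  | succ n ih =>
    intro p hp hdeg hroots
    -- complex root exists
    have hmapne : p.map (algebraMap ℝ ℂ) ≠ 0 := by
      intro h
      exact hp (Polynomial.map_injective _ (algebraMap ℝ ℂ).injective (by simpa using h))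
    have hdegpos : 0 < (p.map (algebraMap ℝ ℂ)).degree := by
      rw [Polynomial.degree_map_eq_of_injective (algebraMap ℝ ℂ).injective]
      rw [Polynomial.degree_eq_natDegree hp, hdeg]
      exact_mod_cast Nat.succ_pos n
    obtain ⟨z, hz⟩ := Complex.exists_root hdegpos
    have hzeval : Polynomial.aeval z p = 0 := by
      rw [Polynomial.aeval_def, ← Polynomial.eval_map]
      exact hz
    have hzim : z.im = 0 := hroots z hzeval
    set r := z.re with hr
    have hzr : z = (r : ℂ) := by
      apply Complex.ext
      · rfl
      · simpa using hzim
    have hroot : p.IsRoot r := by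
      have h2 : Polynomial.aeval ((r:ℝ) : ℂ) p = 0 := by rw [← hzr]; exact hzeval
      have h2' := Polynomial.eval₂_at_apply (p := p) (algebraMap ℝ ℂ) r
      rw [← Polynomial.aeval_def] at h2'
      have hcoe : (algebraMap ℝ ℂ) r = ((r:ℝ) : ℂ) := by
        rw [Complex.coe_algebraMap]
      rw [hcoe] at h2'
      have h5 : (algebraMap ℝ ℂ) (p.eval r) = 0 := by rw [← h2']; exact h2
      have h4 : ((p.eval r : ℝ) : ℂ) = 0 := by
        rw [← congrFun Complex.coe_algebraMap (p.eval r)]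
        exact h5
      exact_mod_cast h4
    obtain ⟨q, hq⟩ := (Polynomial.dvd_iff_isRoot.mpr hroot)
    have hqne : q ≠ 0 := by
      intro h
      rw [h, mul_zero] at hq
      exact hp hq
    have hqdeg : q.natDegree = n := by
      have := Polynomial.natDegree_mul (Polynomial.X_sub_C_ne_zero r) hqne
      rw [← hq, hdeg, Polynomial.natDegree_X_sub_C] at this
      omega
    have hqroots : ∀ z : ℂ, Polynomial.aeval z q = 0 → z.im = 0 := by
      intro w hw
      apply hroots w
      rw [hq, map_mul, hw, mul_zero]
    obtain ⟨l, hlen, hfac⟩ := ih q hqne hqdeg hqroots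
    refine ⟨r :: l, by simp [hlen], ?_⟩
    have hlc : p.leadingCoeff = q.leadingCoeff := by
      rw [hq, Polynomial.leadingCoeff_mul, Polynomial.leadingCoeff_X_sub_C, one_mul]
    rw [hlc, List.map_cons, List.prod_cons, hq]
    conv_lhs => rw [hfac]
    ring

/-- the Bernoulli product polynomial -/
noncomputable def bpoly (l : List ℝ) : Polynomial ℝ :=
  (l.map (fun a => Polynomial.C (1-a) + Polynomial.C a * Polynomial.X)).prod

@[simp] lemma bpoly_nil : bpoly [] = 1 := rfl

lemma bpoly_cons (a : ℝ) (l : List ℝ) :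
    bpoly (a :: l) = (Polynomial.C (1-a) + Polynomial.C a * Polynomial.X) * bpoly l := by
  unfold bpoly
  rw [List.map_cons, List.prod_cons]

lemma bpoly_coeff : ∀ (l : List ℝ) (k : ℕ), (bpoly l).coeff k = pbw l k := by
  intro l
  induction l with
  | nil =>
    intro k
    cases k with
    | zero => simp
    | succ k => simp [Polynomial.coeff_one]
  | cons a l ih =>
    intro k
    rw [bpoly_cons]
    have hexp : (Polynomial.C (1-a) + Polynomial.C a * Polynomial.X) * bpoly l
        = Polynomial.C (1-a) * bpoly l + Polynomial.C a * (Polynomial.X * bpoly l) := by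
      ring
    rw [hexp, Polynomial.coeff_add, Polynomial.coeff_C_mul, Polynomial.coeff_C_mul]
    cases k with
    | zero =>
      have hX : (Polynomial.X * bpoly l).coeff 0 = 0 := by
        rw [Polynomial.mul_coeff_zero]
        simp
      rw [hX, ih 0]
      simp [pbw]
    | succ k =>
      rw [Polynomial.coeff_X_mul, ih (k+1), ih k]
      simp [pbw]

lemma bpoly_eval_one : ∀ (l : List ℝ), (bpoly l).eval 1 = 1 := by
  intro l
  induction l with
  | nil => simp
  | cons a l ih =>
    rw [bpoly_cons, Polynomial.eval_mul, ih]
    simp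

/-- conversion of root factors to Bernoulli factors -/
lemma prod_factor_eq : ∀ (l : List ℝ), (∀ r ∈ l, r ≤ 0) →
    (l.map (fun r => Polynomial.X - Polynomial.C r)).prod
      = Polynomial.C ((l.map (fun r => 1 - r)).prod) * bpoly (l.map (fun r => 1/(1-r))) := by
  intro l
  induction l with
  | nil => simp
  | cons r l ih =>
    intro hle
    have hr := hle r (by simp)
    have hrne : (1:ℝ) - r ≠ 0 := by
      have : (0:ℝ) < 1 - r := by linarith
      linarith
    have h1 : (1-r) * (1/(1-r)) = 1 := by field_simp
    have h2 : (1-r) * (1 - 1/(1-r)) = -r := by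
      rw [mul_sub, mul_one, h1]
      ring
    have hfac : Polynomial.X - Polynomial.C r
        = Polynomial.C (1-r) * (Polynomial.C (1 - 1/(1-r)) + Polynomial.C (1/(1-r)) * Polynomial.X) := by
      rw [mul_add, ← Polynomial.C_mul, h2, ← mul_assoc, ← Polynomial.C_mul, h1,
        Polynomial.C_1, one_mul, Polynomial.C_neg]
      ring
    rw [List.map_cons, List.prod_cons, hfac, ih (fun x hx => hle x (List.mem_cons_of_mem _ hx))]
    rw [List.map_cons, List.prod_cons, List.map_cons, bpoly_cons, Polynomial.C_mul]
    ring

lemma pbw_pad : ∀ (m : ℕ) (l : List ℝ) (k : ℕ),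
    pbw (List.replicate m (0:ℝ) ++ l) k = pbw l k := by
  intro m
  induction m with
  | zero => intro l k; simp
  | succ m ih =>
    intro l k
    rw [List.replicate_succ, List.cons_append, pbw_zero_cons, ih]

/-- The main bridge: a polynomial satisfying the hypotheses equals a Bernoulli product. -/
theorem poly_to_list (d : ℕ) (p : Polynomial ℝ) (hdeg : p.natDegree ≤ d)
    (hroots : ∀ z : ℂ, Polynomial.aeval z p = 0 → z.im = 0)
    (hcoeff : ∀ k, 0 ≤ p.coeff k)
    (h1 : p.eval 1 = 1) :
    ∃ l : List ℝ, l.length = d ∧ (∀ x ∈ l, 0 ≤ x ∧ x ≤ 1) ∧ (∀ k, p.coeff k = pbw l k) := by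
  have hp : p ≠ 0 := by
    intro h
    rw [h] at h1
    simp at h1
  obtain ⟨l₀, hlen₀, hfac₀⟩ := exists_factor p.natDegree p hp rfl hroots
  -- roots are nonpositive
  have hrootval : ∀ r ∈ l₀, p.eval r = 0 := by
    intro r hr
    rw [hfac₀]
    rw [Polynomial.eval_mul]
    have : ((l₀.map (fun r => Polynomial.X - Polynomial.C r)).prod).eval r = 0 := by
      rw [Polynomial.eval_list_prod]
      apply List.prod_eq_zero
      have : (Polynomial.X - Polynomial.C r) ∈ l₀.map (fun r => Polynomial.X - Polynomial.C r) :=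
        List.mem_map.mpr ⟨r, hr, rfl⟩
      refine List.mem_map.mpr ⟨Polynomial.X - Polynomial.C r, this, ?_⟩
      simp
    rw [this, mul_zero]
  have hrle : ∀ r ∈ l₀, r ≤ 0 := by
    intro r hr
    by_contra hpos
    push_neg at hpos
    have hev := hrootval r hr
    rw [Polynomial.eval_eq_sum_range] at hev
    have hz : ∀ k ∈ Finset.range (p.natDegree + 1), p.coeff k * r^k = 0 := by
      have hnn : ∀ k ∈ Finset.range (p.natDegree + 1), 0 ≤ p.coeff k * r^k := by
        intro k _
        exact mul_nonneg (hcoeff k) (le_of_lt (pow_pos hpos k))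
      intro k hk
      exact (Finset.sum_eq_zero_iff_of_nonneg hnn).mp hev k hk
    have hcz : ∀ k, p.coeff k = 0 := by
      intro k
      rcases le_or_gt k p.natDegree with h | h
      · have := hz k (Finset.mem_range.mpr (by omega))
        have hrk : r^k ≠ 0 := ne_of_gt (pow_pos hpos k)
        exact (mul_eq_zero.mp this).resolve_right hrk
      · exact Polynomial.coeff_eq_zero_of_natDegree_lt h
    apply hp
    ext k
    simp [hcz k]
  -- convert
  set ql := l₀.map (fun r => 1/(1-r)) with hql
  have hql_bd : ∀ x ∈ ql, 0 ≤ x ∧ x ≤ 1 := by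
    intro x hx
    rw [hql] at hx
    obtain ⟨r, hr, rfl⟩ := List.mem_map.mp hx
    have hrle' := hrle r hr
    have h1r : (1:ℝ) ≤ 1 - r := by linarith
    have h0r : (0:ℝ) < 1 - r := by linarith
    constructor
    · positivity
    · rw [div_le_one h0r]; linarith
  have hpeq : p = Polynomial.C (p.leadingCoeff * (l₀.map (fun r => 1 - r)).prod) * bpoly ql := by
    conv_lhs => rw [hfac₀, prod_factor_eq l₀ hrle]
    rw [Polynomial.C_mul, hql]
    ring
  -- evaluate at 1 to find the constant is 1
  have hK : p.leadingCoeff * (l₀.map (fun r => 1 - r)).prod = 1 := by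
    have := h1
    rw [hpeq] at this
    rw [Polynomial.eval_mul, Polynomial.eval_C, bpoly_eval_one, mul_one] at this
    exact this
  have hpeq2 : p = bpoly ql := by
    rw [hpeq, hK]
    simp
  -- pad with zeros
  refine ⟨List.replicate (d - l₀.length) 0 ++ ql, ?_, ?_, ?_⟩
  · rw [List.length_append, List.length_replicate, hql, List.length_map]
    have : l₀.length ≤ d := by rw [hlen₀]; exact hdeg
    omega
  · intro x hx
    rcases List.mem_append.mp hx with hx | hx
    · have := List.eq_of_mem_replicate hx
      subst this
      norm_num
    · exact hql_bd x hx
  · intro k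
    rw [pbw_pad, ← bpoly_coeff, hpeq2]

lemma main' (l : List ℝ) (hbd : ∀ x ∈ l, 0 ≤ x ∧ x ≤ 1) (c : ℤ) (hc : l.sum ≤ (c:ℝ)) :
    binCdf l.length (l.sum / l.length) c ≤ cdfz l c :=
  main (l.length * (l.length + 1) + cntS l (l.sum / l.length)) l hbd le_rfl c hc

lemma icc_sum (l : List ℝ) (b c : ℕ) (hbc : b ≤ c) :
    ∑ k ∈ Finset.Icc b c, pbw l k = cdfz l (c:ℤ) - cdfz l ((b:ℤ)-1) := by
  have h1 : cdfz l (c:ℤ) - cdfz l ((b:ℤ)-1)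
      = ∑ k ∈ Finset.range (l.length+1), (if k ∈ Finset.Icc b c then pbw l k else 0) := by
    unfold cdfz
    rw [← Finset.sum_sub_distrib]
    apply Finset.sum_congr rfl
    intro k _
    by_cases hb : b ≤ k
    · by_cases hc : k ≤ c
      · rw [if_pos (by exact_mod_cast hc), if_neg (by omega),
          if_pos (Finset.mem_Icc.mpr ⟨hb, hc⟩)]
        ring
      · rw [if_neg (by omega), if_neg (by omega), if_neg (by
          intro hmem
          exact hc (Finset.mem_Icc.mp hmem).2)]
        ring
    · rw [if_pos (by omega), if_pos (by omega), if_neg (by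
        intro hmem
        exact hb (Finset.mem_Icc.mp hmem).1)]
      ring
  rw [h1, Finset.sum_ite_mem]
  symm
  apply Finset.sum_subset
  · exact Finset.inter_subset_right
  · intro k hk hk2
    apply pbw_eq_zero_of_gt
    have : k ∉ Finset.range (l.length + 1) := by
      intro hr
      exact hk2 (Finset.mem_inter.mpr ⟨hr, hk⟩)
    simp only [Finset.mem_range] at this
    omega

lemma map_one_sub_sum : ∀ (l : List ℝ), (l.map (fun x => 1 - x)).sum = l.length - l.sum := by
  intro l
  induction l with
  | nil => simp
  | cons a l ih =>
    rw [List.map_cons, List.sum_cons, ih, List.sum_cons, List.length_cons]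
    push_cast
    ring

theorem hoeffding (d : ℕ) (p : Polynomial ℝ)
    (hdeg : p.natDegree ≤ d)
    (hroots : ∀ z : ℂ, Polynomial.aeval z p = 0 → z.im = 0)
    (hcoeff : ∀ k, 0 ≤ p.coeff k)
    (h1 : p.eval 1 = 1)
    (s : ℝ) (hs : ∑ k ∈ Finset.range (d + 1), (k : ℝ) * p.coeff k = d * s)
    (b c : ℕ) (hb : (b : ℝ) ≤ d * s) (hc : (d : ℝ) * s ≤ c) :
    ∑ k ∈ Finset.Icc b c, (d.choose k : ℝ) * s ^ k * (1 - s) ^ (d - k)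
      ≤ ∑ k ∈ Finset.Icc b c, p.coeff k := by
  rcases Nat.eq_zero_or_pos d with hd0 | hdpos
  · -- degenerate d = 0
    subst hd0
    have hb0 : b = 0 := by
      have : (b:ℝ) ≤ 0 := by simpa using hb
      exact_mod_cast le_antisymm (by exact_mod_cast this) (Nat.zero_le b)
    subst hb0
    have hpC : p = Polynomial.C (p.coeff 0) :=
      Polynomial.eq_C_of_natDegree_eq_zero (by omega)
    have hc0 : p.coeff 0 = 1 := by
      have := h1
      rw [hpC] at this
      simpa using this
    have h0mem : 0 ∈ Finset.Icc 0 c := Finset.mem_Icc.mpr ⟨le_refl 0, Nat.zero_le c⟩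
    have hL : ∑ k ∈ Finset.Icc 0 c, ((0:ℕ).choose k : ℝ) * s ^ k * (1 - s) ^ (0 - k) = 1 := by
      rw [Finset.sum_eq_single_of_mem 0 h0mem]
      · norm_num
      · intro k _ hk
        have : (0:ℕ).choose k = 0 := Nat.choose_eq_zero_of_lt (by omega)
        rw [this]
        norm_num
    have hR : ∑ k ∈ Finset.Icc 0 c, p.coeff k = 1 := by
      rw [Finset.sum_eq_single_of_mem 0 h0mem]
      · exact hc0
      · intro k _ hk
        apply Polynomial.coeff_eq_zero_of_natDegree_lt
        omega
    rw [hL, hR]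
  · -- main case
    obtain ⟨l, hlen, hbd, hco⟩ := poly_to_list d p hdeg hroots hcoeff h1
    have hdR : (0:ℝ) < (d:ℝ) := by exact_mod_cast hdpos
    have hsum : l.sum = (d:ℝ) * s := by
      have hmom := pbw_moment l
      rw [hlen] at hmom
      rw [← hmom, ← hs]
      apply Finset.sum_congr rfl
      intro k _
      rw [hco k]
    have hbc : b ≤ c := by
      have : (b:ℝ) ≤ (c:ℝ) := le_trans hb hc
      exact_mod_cast this
    have hs0 : 0 ≤ s := by
      have h0 : 0 ≤ l.sum := by
        have : ∀ x ∈ l, (0:ℝ) ≤ x := fun x hx => (hbd x hx).1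
        exact List.sum_nonneg this
      nlinarith [hsum]
    -- upper tail
    have htail : binCdf d s (c:ℤ) ≤ cdfz l (c:ℤ) := by
      have := main' l hbd (c:ℤ) (by
        rw [hsum]
        push_cast
        exact hc)
      rw [hlen, hsum] at this
      have hss : (d:ℝ) * s / (d:ℝ) = s := by field_simp
      rw [hss] at this
      exact this
    -- lower tail by reflection
    have hlow : cdfz l ((b:ℤ)-1) ≤ binCdf d s ((b:ℤ)-1) := by
      set lm := l.map (fun x => 1 - x) with hlm
      have hlm_len : lm.length = d := by rw [hlm, List.length_map, hlen]
      have hlm_bd : ∀ x ∈ lm, 0 ≤ x ∧ x ≤ 1 := by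
        intro x hx
        rw [hlm] at hx
        obtain ⟨y, hy, rfl⟩ := List.mem_map.mp hx
        have := hbd y hy
        constructor <;> linarith [this.1, this.2]
      have hlm_sum : lm.sum = (d:ℝ) - (d:ℝ)*s := by
        rw [hlm, map_one_sub_sum, hlen, hsum]
      have hmain2 := main' lm hlm_bd ((d:ℤ) - (b:ℤ)) (by
        rw [hlm_sum]
        push_cast
        linarith [hb])
      rw [hlm_len, hlm_sum] at hmain2
      have hss2 : ((d:ℝ) - (d:ℝ)*s) / (d:ℝ) = 1 - s := by field_simp
      rw [hss2] at hmain2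
      -- reflection identities
      have hrefl1 := cdfz_reflect l ((b:ℤ)-1)
      rw [hlen] at hrefl1
      have hre : (d:ℤ) - 1 - ((b:ℤ)-1) = (d:ℤ) - (b:ℤ) := by ring
      rw [hre] at hrefl1
      have hrefl2 := cdfz_reflect (List.replicate d s) ((b:ℤ)-1)
      rw [List.length_replicate, hre, List.map_replicate] at hrefl2
      -- hrefl2 : binCdf d s (b-1) + binCdf d (1-s) (d-b) = 1
      have hbin : binCdf d s ((b:ℤ)-1) = 1 - cdfz (List.replicate d (1-s)) ((d:ℤ)-(b:ℤ)) := by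
        unfold binCdf
        linarith [hrefl2]
      rw [hbin]
      rw [← hlm] at hrefl1
      unfold binCdf at hmain2
      linarith [hrefl1, hmain2]
    -- assemble
    have hPB : ∑ k ∈ Finset.Icc b c, p.coeff k = cdfz l (c:ℤ) - cdfz l ((b:ℤ)-1) := by
      rw [← icc_sum l b c hbc]
      apply Finset.sum_congr rfl
      intro k _
      rw [hco k]
    have hBIN : ∑ k ∈ Finset.Icc b c, (d.choose k : ℝ) * s ^ k * (1 - s) ^ (d - k)
        = binCdf d s (c:ℤ) - binCdf d s ((b:ℤ)-1) := by
      unfold binCdf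
      rw [← icc_sum (List.replicate d s) b c hbc]
      · apply Finset.sum_congr rfl
        intro k _
        rw [pbw_replicate_le]
      
    rw [hPB, hBIN]
    linarith [htail, hlow]

end HoeffdingAux

/-- Hoeffding's theorem: a real-rooted probability generating polynomial of
degree at most `d` with mean `d·s` is at least as concentrated around the mean
as the binomial distribution with parameters `d` and `s`. -/
theorem stmt_9 (d : ℕ) (p : Polynomial ℝ)
    (hdeg : p.natDegree ≤ d)
    (hroots : ∀ z : ℂ, Polynomial.aeval z p = 0 → z.im = 0)
    (hcoeff : ∀ k, 0 ≤ p.coeff k)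
    (h1 : p.eval 1 = 1)
    (s : ℝ) (hs : ∑ k ∈ Finset.range (d + 1), (k : ℝ) * p.coeff k = d * s)
    (b c : ℕ) (hb : (b : ℝ) ≤ d * s) (hc : (d : ℝ) * s ≤ c) :
    ∑ k ∈ Finset.Icc b c, (d.choose k : ℝ) * s ^ k * (1 - s) ^ (d - k)
      ≤ ∑ k ∈ Finset.Icc b c, p.coeff k :=
  HoeffdingAux.hoeffding d p hdeg hroots hcoeff h1 s hs b c hb hc
end

section
/- Capacity preservation under taking a coefficient: Let P(x_1,...,x_n) be a real stable polynomial with non-negative coefficients in which x_1 has degree d, and let Q(x_2,...,x_n) be the coefficient of x_1^r in P. Let α = (r, α_2, ..., α_n) with α_i ≥ 0 and α' = (α_2,...,α_n). Then cap_{α'}(Q) ≥ C(d,r) · (r/d)^r · ((d-r)/d)^{d-r} · cap_α(P). -/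
open Multiset in
lemma my_esymm_zero (s : Multiset ℝ) : s.esymm 0 = 1 := by
  simp [Multiset.esymm, Multiset.powersetCard_zero_left]

open Multiset in
lemma my_esymm_cons (a : ℝ) (s : Multiset ℝ) (k : ℕ) :
    (a ::ₘ s).esymm (k + 1) = s.esymm (k + 1) + a * s.esymm k := by
  simp only [Multiset.esymm, Multiset.powersetCard_cons, Multiset.map_add, Multiset.sum_add,
    Multiset.map_map]
  congr 1
  rw [← Multiset.sum_map_mul_left]
  apply congrArg
  apply Multiset.map_congr rfl
  intro t _
  simp [Multiset.prod_cons]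

open Multiset in
lemma my_esymm_eq_zero {s : Multiset ℝ} {k : ℕ} (h : Multiset.card s < k) : s.esymm k = 0 := by
  simp [Multiset.esymm, Multiset.powersetCard_eq_empty k h]

open Multiset in
lemma my_esymm_card (s : Multiset ℝ) : s.esymm (Multiset.card s) = s.prod := by
  induction s using Multiset.induction_on with
  | empty => simp [my_esymm_zero]
  | cons a s ih =>
    rw [Multiset.card_cons, my_esymm_cons, my_esymm_eq_zero (by omega), ih, Multiset.prod_cons,
      zero_add]

open Multiset in
lemma my_esymm_one (s : Multiset ℝ) : s.esymm 1 = s.sum := by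
  induction s using Multiset.induction_on with
  | empty => simp [my_esymm_eq_zero (s := 0) (k := 1) (by simp)]
  | cons a s ih => rw [my_esymm_cons, ih, my_esymm_zero, Multiset.sum_cons]; ring

open Multiset in
lemma my_esymm_nonneg {s : Multiset ℝ} (h : ∀ x ∈ s, 0 ≤ x) (k : ℕ) : 0 ≤ s.esymm k := by
  apply Multiset.sum_nonneg
  intro z hz
  rcases Multiset.mem_map.mp hz with ⟨t, ht, rfl⟩
  exact Multiset.prod_nonneg fun y hy =>
    h y (Multiset.mem_of_le (Multiset.mem_powersetCard.mp ht).1 hy)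

open Multiset in
lemma my_esymm_pos_pred {s : Multiset ℝ} (h : ∀ x ∈ s, 0 ≤ x) {k : ℕ}
    (hpos : 0 < s.esymm (k + 1)) : 0 < s.esymm k := by
  classical
  -- find a positive term
  have : ∃ t ∈ s.powersetCard (k + 1), 0 < t.prod := by
    by_contra hc
    push_neg at hc
    have hsn : ∀ (t : Multiset ℝ), (∀ x ∈ t, x ≤ 0) → t.sum ≤ 0 := by
      intro t
      induction t using Multiset.induction_on with
      | empty => simp
      | cons b t iht =>
        intro hb
        rw [Multiset.sum_cons]
        have := hb b (Multiset.mem_cons_self b t)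
        have := iht (fun x hx => hb x (Multiset.mem_cons_of_mem hx))
        linarith
    have : s.esymm (k + 1) ≤ 0 := by
      apply hsn
      intro z hz
      rcases Multiset.mem_map.mp hz with ⟨t, ht, rfl⟩
      exact hc t ht
    linarith
  rcases this with ⟨t, ht, htp⟩
  rcases Multiset.mem_powersetCard.mp ht with ⟨hts, htc⟩
  have htpos : ∀ x ∈ t, 0 < x := by
    intro x hx
    rcases (h x (Multiset.mem_of_le hts hx)).lt_or_eq with h' | h'
    · exact h'
    · exfalso
      rw [Multiset.prod_eq_zero (h' ▸ hx : (0:ℝ) ∈ t)] at htp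
      exact lt_irrefl _ htp
  have htne : t ≠ 0 := by
    intro h0; rw [h0] at htc; simp at htc
  rcases Multiset.exists_mem_of_ne_zero htne with ⟨a, ha⟩
  set t' := t.erase a with ht'
  have ht't : t' ≤ t := Multiset.erase_le a t
  have ht'c : Multiset.card t' = k := by
    rw [ht', Multiset.card_erase_of_mem ha, htc]; rfl
  have ht'mem : t' ∈ s.powersetCard k :=
    Multiset.mem_powersetCard.mpr ⟨le_trans ht't hts, ht'c⟩
  have ht'pos : 0 < t'.prod :=
    Multiset.prod_pos fun x hx => htpos x (Multiset.mem_of_le ht't hx)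
  have hle : t'.prod ≤ s.esymm k := by
    apply Multiset.single_le_sum
    · intro z hz
      rcases Multiset.mem_map.mp hz with ⟨u, hu, rfl⟩
      exact Multiset.prod_nonneg fun y hy =>
        h y (Multiset.mem_of_le (Multiset.mem_powersetCard.mp hu).1 hy)
    · exact Multiset.mem_map_of_mem _ ht'mem
  linarith

open Multiset in
lemma my_esymm_pos_mono {s : Multiset ℝ} (h : ∀ x ∈ s, 0 ≤ x) :
    ∀ k l, l ≤ k → 0 < s.esymm k → 0 < s.esymm l := by
  intro k
  induction k with
  | zero => intro l hl hp; rwa [Nat.le_zero.mp hl]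
  | succ k ih =>
    intro l hl hp
    rcases Nat.eq_or_lt_of_le hl with h' | h'
    · rwa [h']
    · exact ih l (by omega) (my_esymm_pos_pred h hp)

open Multiset in
lemma my_esymm_inv_one : ∀ (s : Multiset ℝ), (∀ x ∈ s, x ≠ 0) → 1 ≤ Multiset.card s →
    s.esymm (Multiset.card s - 1) = s.prod * ((s.map (·⁻¹)).sum) := by
  intro s
  induction s using Multiset.induction_on with
  | empty => intro _ h; simp at h
  | cons a s ih =>
    intro hne _
    have ha : a ≠ 0 := hne a (Multiset.mem_cons_self a s)
    rcases Nat.eq_zero_or_pos (Multiset.card s) with hc | hc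
    · rw [Multiset.card_eq_zero.mp hc] at *
      simp [my_esymm_zero, ha]
    · have hcs : Multiset.card (a ::ₘ s) - 1 = (Multiset.card s - 1) + 1 := by
        rw [Multiset.card_cons]; omega
      rw [hcs, my_esymm_cons]
      have h1 : (Multiset.card s - 1) + 1 = Multiset.card s := by omega
      rw [h1, my_esymm_card, ih (fun x hx => hne x (Multiset.mem_cons_of_mem hx)) hc,
        Multiset.map_cons, Multiset.sum_cons, Multiset.prod_cons]
      field_simp

open Multiset in
lemma my_esymm_inv_two : ∀ (s : Multiset ℝ), (∀ x ∈ s, x ≠ 0) → 2 ≤ Multiset.card s →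
    s.esymm (Multiset.card s - 2) = s.prod * ((s.map (·⁻¹)).esymm 2) := by
  intro s
  induction s using Multiset.induction_on with
  | empty => intro _ h; simp at h
  | cons a s ih =>
    intro hne hcard
    have ha : a ≠ 0 := hne a (Multiset.mem_cons_self a s)
    have hs : ∀ x ∈ s, x ≠ 0 := fun x hx => hne x (Multiset.mem_cons_of_mem hx)
    rw [Multiset.card_cons] at hcard
    rcases eq_or_lt_of_le hcard with hc | hc
    · -- card s = 1
      rcases Multiset.card_eq_one.mp (by omega : Multiset.card s = 1) with ⟨b, rfl⟩
      have hb : b ≠ 0 := hs b (Multiset.mem_singleton_self b)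
      have h2 : Multiset.card (a ::ₘ {b}) - 2 = 0 := by simp
      rw [h2, my_esymm_zero]
      have : (a ::ₘ ({b} : Multiset ℝ)).map (·⁻¹) = a⁻¹ ::ₘ {b⁻¹} := by simp
      rw [this]
      have hcard2 : Multiset.card (a⁻¹ ::ₘ ({b⁻¹} : Multiset ℝ)) = 2 := by simp
      rw [← hcard2, my_esymm_card]
      simp [Multiset.prod_cons]
      field_simp
    · -- card s ≥ 2
      have hc2 : 2 ≤ Multiset.card s := by omega
      have hcs : Multiset.card (a ::ₘ s) - 2 = (Multiset.card s - 2) + 1 := by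
        rw [Multiset.card_cons]; omega
      rw [hcs, my_esymm_cons]
      have h1 : (Multiset.card s - 2) + 1 = Multiset.card s - 1 := by omega
      rw [h1, my_esymm_inv_one s hs (by omega), ih hs hc2, Multiset.map_cons, Multiset.prod_cons,
        my_esymm_cons, my_esymm_one]
      field_simp
      ring

open Multiset in
lemma my_esymm_sq (s : Multiset ℝ) :
    s.sum ^ 2 = (s.map (· ^ 2)).sum + 2 * s.esymm 2 := by
  induction s using Multiset.induction_on with
  | empty => simp [my_esymm_eq_zero (s := 0) (k := 2) (by simp)]
  | cons a s ih =>
    rw [Multiset.sum_cons, Multiset.map_cons, Multiset.sum_cons, my_esymm_cons, my_esymm_one]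
    nlinarith [ih]

open Multiset in
lemma my_sum_mul_le (a : ℝ) : ∀ (s : Multiset ℝ),
    2 * a * s.sum ≤ (Multiset.card s : ℝ) * a ^ 2 + (s.map (· ^ 2)).sum := by
  intro s
  induction s using Multiset.induction_on with
  | empty => simp
  | cons b s ih =>
    rw [Multiset.sum_cons, Multiset.map_cons, Multiset.sum_cons, Multiset.card_cons]
    push_cast
    nlinarith [two_mul_le_add_sq a b]

open Multiset in
lemma my_esymm_two_ineq : ∀ (s : Multiset ℝ) (m : ℕ), Multiset.card s = m + 1 →
    2 * s.esymm 2 ≤ (m : ℝ) * (s.map (· ^ 2)).sum := by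
  intro s
  induction s using Multiset.induction_on with
  | empty => intro m h; simp at h
  | cons a s ih =>
    intro m hm
    rw [Multiset.card_cons] at hm
    have hcs : Multiset.card s = m := by omega
    rw [my_esymm_cons, my_esymm_one, Multiset.map_cons, Multiset.sum_cons]
    rcases Nat.eq_zero_or_pos m with h0 | hpos
    · subst h0
      rw [Multiset.card_eq_zero.mp hcs]
      simp [my_esymm_eq_zero (s := 0) (k := 2) (by simp)]
    · have ih' := ih (m - 1) (by omega)
      have hsum := my_sum_mul_le a s
      rw [hcs] at hsum
      have hcast : ((m - 1 : ℕ) : ℝ) = (m : ℝ) - 1 := by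
        rw [Nat.cast_sub hpos]; simp
      rw [hcast] at ih'
      nlinarith

open Polynomial

/-- A nonzero real polynomial with nonnegative coefficients has only nonpositive roots. -/
lemma my_roots_nonpos {p : ℝ[X]} (hp : p ≠ 0) (h : ∀ k, 0 ≤ p.coeff k) {x : ℝ}
    (hx : x ∈ p.roots) : x ≤ 0 := by
  by_contra hc
  push_neg at hc
  have hev : p.eval x = 0 := (Polynomial.mem_roots hp).mp hx
  rw [Polynomial.eval_eq_sum_range] at hev
  have hz : ∀ i ∈ Finset.range (p.natDegree + 1), p.coeff i * x ^ i = 0 := by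
    rw [Finset.sum_eq_zero_iff_of_nonneg] at hev
    · exact hev
    · intro i _
      exact mul_nonneg (h i) (le_of_lt (pow_pos hc i))
  apply hp
  ext k
  rcases le_or_gt k p.natDegree with hk | hk
  · have := hz k (Finset.mem_range.mpr (by omega))
    have hxk : x ^ k ≠ 0 := ne_of_gt (pow_pos hc k)
    simpa [coeff_zero] using (mul_eq_zero.mp this).resolve_right hxk
  · simp [Polynomial.coeff_eq_zero_of_natDegree_lt hk]

/-- Coefficients in terms of the (negated) roots. -/
lemma my_coeff_formula {p : ℝ[X]} (hcard : Multiset.card p.roots = p.natDegree)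
    {k : ℕ} (hk : k ≤ p.natDegree) :
    p.coeff k = p.leadingCoeff * (p.roots.map Neg.neg).esymm (p.natDegree - k) := by
  rw [Polynomial.coeff_eq_esymm_roots_of_card hcard hk, Multiset.esymm_neg]
  ring

lemma my_newton_base {p : ℝ[X]} (hp : p ≠ 0) (hcard : Multiset.card p.roots = p.natDegree)
    (hnn : ∀ k, 0 ≤ p.coeff k) (h2 : 2 ≤ p.natDegree) :
    p.coeff 0 * p.coeff 2 * ((p.natDegree.choose 1 : ℝ)) ^ 2 ≤
      ((p.natDegree.choose 0 : ℝ)) * ((p.natDegree.choose 2 : ℝ)) * p.coeff 1 ^ 2 := by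
  classical
  set d := p.natDegree with hd
  set μs := p.roots.map Neg.neg with hμs
  have hcardμ : Multiset.card μs = d := by rw [hμs, Multiset.card_map, hcard]
  have hμnn : ∀ y ∈ μs, 0 ≤ y := by
    intro y hy
    rcases Multiset.mem_map.mp hy with ⟨x, hx, rfl⟩
    simpa using my_roots_nonpos hp hnn hx
  have hlc : 0 < p.leadingCoeff := by
    rcases (hnn d).lt_or_eq with h' | h'
    · rwa [Polynomial.coeff_natDegree] at h'
    · exact absurd (by rw [← Polynomial.coeff_natDegree]; exact h'.symm)
        (Polynomial.leadingCoeff_ne_zero.mpr hp)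
  have hc0 : p.coeff 0 = p.leadingCoeff * μs.esymm d := by
    simpa using my_coeff_formula hcard (Nat.zero_le d)
  have hc1 : p.coeff 1 = p.leadingCoeff * μs.esymm (d - 1) :=
    my_coeff_formula hcard (by omega)
  have hc2 : p.coeff 2 = p.leadingCoeff * μs.esymm (d - 2) :=
    my_coeff_formula hcard (by omega)
  rw [Nat.choose_one_right, Nat.choose_zero_right, Nat.cast_one]
  by_cases h0 : (0 : ℝ) ∈ μs
  · have : μs.esymm d = 0 := by
      rw [← hcardμ, my_esymm_card]
      exact Multiset.prod_eq_zero h0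
    rw [hc0, this, mul_zero, zero_mul, zero_mul]
    positivity
  · have hμne : ∀ x ∈ μs, x ≠ 0 := fun x hx hx0 => h0 (hx0 ▸ hx)
    set ν := μs.map (·⁻¹) with hν
    have hcardν : Multiset.card ν = d := by rw [hν, Multiset.card_map, hcardμ]
    have hμpos : ∀ x ∈ μs, 0 < x := fun x hx => (hμnn x hx).lt_of_ne (Ne.symm (hμne x hx))
    have hPr : 0 < μs.prod := Multiset.prod_pos hμpos
    have hEd : μs.esymm d = μs.prod := by rw [← hcardμ, my_esymm_card]
    have hEd1 : μs.esymm (d - 1) = μs.prod * ν.sum := by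
      rw [← hcardμ]
      exact my_esymm_inv_one μs hμne (by rw [hcardμ]; omega)
    have hEd2 : μs.esymm (d - 2) = μs.prod * ν.esymm 2 := by
      rw [← hcardμ]
      exact my_esymm_inv_two μs hμne (by rw [hcardμ]; omega)
    have hνnn : ∀ x ∈ ν, 0 ≤ x := by
      intro x hx
      rcases Multiset.mem_map.mp hx with ⟨y, hy, rfl⟩
      exact le_of_lt (inv_pos.mpr (hμpos y hy))
    have he2nn : 0 ≤ ν.esymm 2 := my_esymm_nonneg hνnn 2
    have hkey : 2 * ν.esymm 2 ≤ ((d - 1 : ℕ) : ℝ) * (ν.map (· ^ 2)).sum :=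
      my_esymm_two_ineq ν (d - 1) (by omega)
    have hsq : ν.sum ^ 2 = (ν.map (· ^ 2)).sum + 2 * ν.esymm 2 := my_esymm_sq ν
    have hc2r : (d.choose 2 : ℝ) * 2 = (d : ℝ) * ((d : ℝ) - 1) := by
      have hn : d.choose 2 * 2 = d * (d - 1) := by
        have := Nat.add_one_mul_choose_eq (d - 1) 1
        have hs : d - 1 + 1 = d := by omega
        rw [hs, Nat.choose_one_right] at this
        norm_num at this
        omega
      have := congrArg (fun x : ℕ => (x : ℝ)) hn
      push_cast [Nat.cast_sub (by omega : 1 ≤ d)] at this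
      linarith
    have hdm1 : ((d - 1 : ℕ) : ℝ) = (d : ℝ) - 1 := by
      rw [Nat.cast_sub (by omega : 1 ≤ d)]; simp
    rw [hdm1] at hkey
    have hd2 : (2 : ℝ) ≤ (d : ℝ) := by exact_mod_cast h2
    -- main scalar inequality
    have hkey2 : (d : ℝ) * (2 * ν.esymm 2) ≤ (d : ℝ) * (((d : ℝ) - 1) * (ν.map (· ^ 2)).sum) :=
      mul_le_mul_of_nonneg_left hkey (by positivity)
    have hC2 : (d.choose 2 : ℝ) = (d : ℝ) * ((d : ℝ) - 1) / 2 := by linarith [hc2r]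
    have hmain : (d : ℝ) ^ 2 * ν.esymm 2 ≤ (d.choose 2 : ℝ) * ν.sum ^ 2 := by
      rw [hC2, hsq]
      nlinarith [hkey2, he2nn, hd2]
    rw [hc0, hc1, hc2, hEd, hEd1, hEd2]
    have hL : 0 < p.leadingCoeff * μs.prod := mul_pos hlc hPr
    have H2 := mul_le_mul_of_nonneg_left hmain (le_of_lt (mul_pos hL hL))
    calc p.leadingCoeff * μs.prod * (p.leadingCoeff * (μs.prod * ν.esymm 2)) * (d : ℝ) ^ 2
        = (p.leadingCoeff * μs.prod) * (p.leadingCoeff * μs.prod) * ((d : ℝ) ^ 2 * ν.esymm 2) := by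
          ring
      _ ≤ (p.leadingCoeff * μs.prod) * (p.leadingCoeff * μs.prod) *
            ((d.choose 2 : ℝ) * ν.sum ^ 2) := H2
      _ = 1 * (d.choose 2 : ℝ) * (p.leadingCoeff * (μs.prod * ν.sum)) ^ 2 := by ring

lemma my_rr_derivative {p : ℝ[X]} (hp : p ≠ 0) (hcard : Multiset.card p.roots = p.natDegree)
    (hd : 1 ≤ p.natDegree) :
    derivative p ≠ 0 ∧ Multiset.card (derivative p).roots = (derivative p).natDegree ∧
      (derivative p).natDegree = p.natDegree - 1 := by
  have hco : (derivative p).coeff (p.natDegree - 1) ≠ 0 := by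
    rw [Polynomial.coeff_derivative]
    have h1 : p.natDegree - 1 + 1 = p.natDegree := by omega
    rw [h1]
    rw [Polynomial.coeff_natDegree]
    apply mul_ne_zero (Polynomial.leadingCoeff_ne_zero.mpr hp)
    positivity
  have hq0 : derivative p ≠ 0 := fun h => hco (by simp [h])
  have hdeg1 : p.natDegree - 1 ≤ (derivative p).natDegree :=
    Polynomial.le_natDegree_of_ne_zero hco
  have hdeg2 : (derivative p).natDegree ≤ p.natDegree - 1 := Polynomial.natDegree_derivative_le p
  have hdeg : (derivative p).natDegree = p.natDegree - 1 := le_antisymm hdeg2 hdeg1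
  refine ⟨hq0, le_antisymm (Polynomial.card_roots' _) ?_, hdeg⟩
  have h3 := Polynomial.card_roots_le_derivative p
  rw [hdeg]
  omega

lemma my_newton : ∀ (k : ℕ) (p : ℝ[X]), p ≠ 0 → Multiset.card p.roots = p.natDegree →
    (∀ i, 0 ≤ p.coeff i) → k + 2 ≤ p.natDegree →
    p.coeff k * p.coeff (k + 2) * ((p.natDegree.choose (k + 1) : ℝ)) ^ 2 ≤
      ((p.natDegree.choose k : ℝ)) * ((p.natDegree.choose (k + 2) : ℝ)) * p.coeff (k + 1) ^ 2 := by
  intro k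
  induction k with
  | zero => intro p hp hcard hnn h2; exact my_newton_base hp hcard hnn h2
  | succ k ih =>
    intro p hp hcard hnn h2
    set m := p.natDegree with hm
    obtain ⟨hq0, hqcard, hqdeg⟩ := my_rr_derivative hp hcard (by omega)
    set q := derivative p with hq
    have hqnn : ∀ i, 0 ≤ q.coeff i := by
      intro i
      rw [hq, Polynomial.coeff_derivative]
      exact mul_nonneg (hnn _) (by positivity)
    have hIH := ih q hq0 hqcard hqnn (by omega)
    rw [hqdeg] at hIH
    rw [hq] at hIH
    simp only [Polynomial.coeff_derivative] at hIH
    -- abbreviations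
    set A := p.coeff (k + 1) with hA
    set B := p.coeff (k + 2) with hB
    set Cc := p.coeff (k + 3) with hCc
    set c1 := (m.choose (k + 1) : ℝ) with hc1
    set c2 := (m.choose (k + 2) : ℝ) with hc2
    set c3 := (m.choose (k + 3) : ℝ) with hc3
    set d1 := ((m - 1).choose k : ℝ) with hd1
    set d2 := ((m - 1).choose (k + 1) : ℝ) with hd2
    set d3 := ((m - 1).choose (k + 2) : ℝ) with hd3
    have hiden : ∀ j : ℕ, (((m - 1).choose j : ℝ)) * m = (m.choose (j + 1) : ℝ) * (j + 1) := by
      intro j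
      have := Nat.add_one_mul_choose_eq (m - 1) j
      have hs : m - 1 + 1 = m := by omega
      rw [hs] at this
      have := congrArg (fun x : ℕ => (x : ℝ)) this
      push_cast at this
      linarith
    have e1 : d1 * (m : ℝ) = c1 * ((k : ℝ) + 1) := by
      have := hiden k; push_cast at this; rw [hd1, hc1]; push_cast; linarith
    have e2 : d2 * (m : ℝ) = c2 * ((k : ℝ) + 2) := by
      have := hiden (k + 1); push_cast at this; rw [hd2, hc2]; push_cast; linarith
    have e3 : d3 * (m : ℝ) = c3 * ((k : ℝ) + 3) := by
      have := hiden (k + 2); push_cast at this; rw [hd3, hc3]; push_cast; linarith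
    -- the inherited inequality
    have hIH' : (A * ((k : ℝ) + 1)) * (Cc * ((k : ℝ) + 3)) * d2 ^ 2 ≤
        d1 * d3 * (B * ((k : ℝ) + 2)) ^ 2 := by
      convert hIH using 2 <;> push_cast <;> try ring
    have hm2 : (0:ℝ) ≤ (m : ℝ) ^ 2 := by positivity
    have H := mul_le_mul_of_nonneg_right hIH' hm2
    set κ := ((k : ℝ) + 1) * ((k : ℝ) + 2) ^ 2 * ((k : ℝ) + 3) with hκ
    have hκpos : 0 < κ := by positivity
    have lhs_eq : (A * ((k : ℝ) + 1)) * (Cc * ((k : ℝ) + 3)) * d2 ^ 2 * (m : ℝ) ^ 2 =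
        (A * Cc * c2 ^ 2) * κ := by
      rw [hκ]
      linear_combination (A * Cc * ((k : ℝ) + 1) * ((k : ℝ) + 3) *
        (d2 * (m : ℝ) + c2 * ((k : ℝ) + 2))) * e2
    have rhs_eq : d1 * d3 * (B * ((k : ℝ) + 2)) ^ 2 * (m : ℝ) ^ 2 =
        (c1 * c3 * B ^ 2) * κ := by
      rw [hκ]
      linear_combination (B ^ 2 * ((k : ℝ) + 2) ^ 2 * d3 * (m : ℝ)) * e1 +
        (B ^ 2 * ((k : ℝ) + 2) ^ 2 * (c1 * ((k : ℝ) + 1))) * e3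
    rw [lhs_eq, rhs_eq] at H
    have := le_of_mul_le_mul_right (by exact H) hκpos
    calc p.coeff (k + 1) * p.coeff (k + 1 + 2) * ((m.choose (k + 1 + 1) : ℝ)) ^ 2
        = A * Cc * c2 ^ 2 := by rw [hA, hc2]; try norm_num
      _ ≤ c1 * c3 * B ^ 2 := this
      _ = (m.choose (k + 1) : ℝ) * (m.choose (k + 1 + 2) : ℝ) * p.coeff (k + 1 + 1) ^ 2 := by
          rw [hc1, hc3, hB]; try norm_num

open Polynomial

/-- positivity of coefficients propagates upward (below the degree). -/
lemma my_coeff_pos_mono {p : ℝ[X]} (hp : p ≠ 0) (hcard : Multiset.card p.roots = p.natDegree)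
    (hnn : ∀ i, 0 ≤ p.coeff i) {j i : ℕ} (hji : j ≤ i) (hid : i ≤ p.natDegree)
    (hj : 0 < p.coeff j) : 0 < p.coeff i := by
  have hlc : 0 < p.leadingCoeff := by
    rcases (hnn p.natDegree).lt_or_eq with h' | h'
    · rwa [Polynomial.coeff_natDegree] at h'
    · exact absurd (by rw [← Polynomial.coeff_natDegree]; exact h'.symm)
        (Polynomial.leadingCoeff_ne_zero.mpr hp)
  set μs := p.roots.map Neg.neg with hμs
  have hμnn : ∀ y ∈ μs, 0 ≤ y := by
    intro y hy
    rcases Multiset.mem_map.mp hy with ⟨x, hx, rfl⟩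
    simpa using my_roots_nonpos hp hnn hx
  have hcj := my_coeff_formula hcard (le_trans hji hid)
  have hci := my_coeff_formula hcard hid
  rw [hcj] at hj
  rw [hci]
  have hEj : 0 < μs.esymm (p.natDegree - j) := by
    by_contra hc
    push_neg at hc
    nlinarith [my_esymm_nonneg hμnn (p.natDegree - j)]
  have hEi : 0 < μs.esymm (p.natDegree - i) :=
    my_esymm_pos_mono hμnn (p.natDegree - j) (p.natDegree - i) (by omega) hEj
  exact mul_pos hlc hEi

set_option maxHeartbeats 2000000 in
/-- The core univariate capacity-coefficient inequality for real-rooted polynomials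
with nonnegative coefficients. -/
theorem my_core {p : ℝ[X]} (hp : p ≠ 0) (hcard : Multiset.card p.roots = p.natDegree)
    (hnn : ∀ i, 0 ≤ p.coeff i) {d r : ℕ} (hd : p.natDegree = d) (hr : r ≤ d)
    (cap : ℝ) (hcap : ∀ t : ℝ, 0 < t → cap * t ^ r ≤ p.eval t) :
    (d.choose r : ℝ) * ((r : ℝ) / d) ^ r * (((d - r : ℕ) : ℝ) / d) ^ (d - r) * cap ≤
      p.coeff r := by
  have heval : ∀ t : ℝ, p.eval t = ∑ i ∈ Finset.range (d + 1), p.coeff i * t ^ i := by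
    intro t
    rw [Polynomial.eval_eq_sum_range, hd]
  rcases Nat.eq_zero_or_pos r with hr0 | hrpos
  · -- case r = 0
    subst hr0
    have hone : (((d - 0 : ℕ) : ℝ) / d) ^ (d - 0) = 1 := by
      rcases Nat.eq_zero_or_pos d with h0 | h0
      · subst h0; norm_num
      · rw [Nat.sub_zero, div_self (by positivity), one_pow]
    rw [hone, Nat.choose_zero_right]
    norm_num
    -- goal : cap ≤ p.coeff 0
    apply le_of_forall_pos_le_add
    intro ε hε
    set M := ∑ i ∈ Finset.range d, p.coeff (i + 1) with hM
    have hMnn : 0 ≤ M := Finset.sum_nonneg fun i _ => hnn (i + 1)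
    set t := min 1 (ε / (M + 1)) with ht
    have htpos : 0 < t := lt_min one_pos (by positivity)
    have ht1 : t ≤ 1 := min_le_left _ _
    have hcapt := hcap t htpos
    rw [pow_zero, mul_one, heval t, Finset.sum_range_succ'] at hcapt
    have hbound : ∑ i ∈ Finset.range d, p.coeff (i + 1) * t ^ (i + 1) ≤ M * t := by
      rw [hM, Finset.sum_mul]
      apply Finset.sum_le_sum
      intro i _
      exact mul_le_mul_of_nonneg_left
        (pow_le_of_le_one (le_of_lt htpos) ht1 (Nat.succ_ne_zero i)) (hnn (i + 1))
    have htM : M * t ≤ ε := by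
      have h1 : t ≤ ε / (M + 1) := min_le_right _ _
      have h2 : M * t ≤ M * (ε / (M + 1)) := mul_le_mul_of_nonneg_left h1 hMnn
      have h3 : M * (ε / (M + 1)) ≤ ε := by
        rw [mul_div_assoc']
        rw [div_le_iff₀ (by positivity)]
        nlinarith
      linarith
    simp only [pow_zero, mul_one] at hcapt
    linarith
  rcases eq_or_lt_of_le hr with hrd | hrd
  · -- case r = d (> 0)
    subst hrd
    have h1 : ((r : ℝ) / r) ^ r = 1 := by
      rw [div_self (by positivity), one_pow]
    have h2 : (((r - r : ℕ) : ℝ) / r) ^ (r - r) = 1 := by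
      rw [Nat.sub_self, pow_zero]
    rw [h1, h2, Nat.choose_self]
    norm_num
    -- goal : cap ≤ p.coeff r
    apply le_of_forall_pos_le_add
    intro ε hε
    obtain ⟨e, rfl⟩ : ∃ e, r = e + 1 := ⟨r - 1, by omega⟩
    set M := ∑ i ∈ Finset.range (e + 1), p.coeff i with hM
    have hMnn : 0 ≤ M := Finset.sum_nonneg fun i _ => hnn i
    set t := max 1 ((M + 1) / ε) with ht
    have ht1 : (1 : ℝ) ≤ t := le_max_left _ _
    have htpos : 0 < t := lt_of_lt_of_le one_pos ht1
    have hcapt := hcap t htpos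
    rw [heval t, Finset.sum_range_succ] at hcapt
    have hbound : ∑ i ∈ Finset.range (e + 1), p.coeff i * t ^ i ≤ M * t ^ e := by
      rw [hM, Finset.sum_mul]
      apply Finset.sum_le_sum
      intro i hi
      exact mul_le_mul_of_nonneg_left
        (pow_le_pow_right₀ ht1 (by have := Finset.mem_range.mp hi; omega)) (hnn i)
    have hcap2 : cap * t ^ (e + 1) ≤ M * t ^ e + p.coeff (e + 1) * t ^ (e + 1) := by linarith
    have hdiv : cap ≤ M / t + p.coeff (e + 1) := by
      have hne : t ^ (e + 1) ≠ 0 := by positivity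
      have := (div_le_div_iff_of_pos_right (show (0:ℝ) < t ^ (e + 1) by positivity)).mpr hcap2
      rwa [mul_div_cancel_right₀ _ hne, show (M * t ^ e + p.coeff (e + 1) * t ^ (e + 1)) /
        t ^ (e + 1) = M / t + p.coeff (e + 1) from by
          field_simp
          ring] at this
    have hMt : M / t ≤ ε := by
      rw [div_le_iff₀ htpos]
      have h1 : (M + 1) / ε ≤ t := le_max_right _ _
      rw [div_le_iff₀ hε] at h1
      nlinarith
    linarith
  -- now 0 < r < d
  have hconstnn : 0 ≤ (d.choose r : ℝ) * ((r : ℝ) / d) ^ r * (((d - r : ℕ) : ℝ) / d) ^ (d - r) := by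
    positivity
  rcases (hnn r).eq_or_lt with hcr | hcr
  · -- coeff r = 0 : show cap ≤ 0
    have hzero : ∀ i, i ≤ r → p.coeff i = 0 := by
      intro i hi
      by_contra hc
      have : 0 < p.coeff i := (hnn i).lt_of_ne (Ne.symm hc)
      have := my_coeff_pos_mono hp hcard hnn hi (by omega) this
      rw [← hcr] at this
      exact lt_irrefl _ this
    have hcap0 : cap ≤ 0 := by
      apply le_of_forall_pos_le_add
      intro ε hε
      set M := ∑ i ∈ Finset.range (d + 1), p.coeff i with hM
      have hMnn : 0 ≤ M := Finset.sum_nonneg fun i _ => hnn i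
      set t := min 1 (ε / (M + 1)) with ht
      have htpos : 0 < t := lt_min one_pos (by positivity)
      have ht1 : t ≤ 1 := min_le_left _ _
      have hcapt := hcap t htpos
      rw [heval t] at hcapt
      have hbound : ∑ i ∈ Finset.range (d + 1), p.coeff i * t ^ i ≤ M * t ^ (r + 1) := by
        rw [hM, Finset.sum_mul]
        apply Finset.sum_le_sum
        intro i hi
        rcases le_or_gt i r with hir | hir
        · rw [hzero i hir, zero_mul, zero_mul]
        · exact mul_le_mul_of_nonneg_left
            (pow_le_pow_of_le_one (le_of_lt htpos) ht1 (by omega)) (hnn i)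
      have hchain : cap * t ^ r ≤ (M * t) * t ^ r := by
        have : M * t ^ (r + 1) = (M * t) * t ^ r := by ring
        linarith [this ▸ le_trans hcapt hbound]
      have hcapMt : cap ≤ M * t := le_of_mul_le_mul_right
        (by linarith [hchain]) (by positivity : (0:ℝ) < t ^ r)
      have htM : M * t ≤ ε := by
        have h1 : t ≤ ε / (M + 1) := min_le_right _ _
        have h2 : M * t ≤ M * (ε / (M + 1)) := mul_le_mul_of_nonneg_left h1 hMnn
        have h3 : M * (ε / (M + 1)) ≤ ε := by
          rw [mul_div_assoc']
          rw [div_le_iff₀ (by positivity)]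
          nlinarith
        linarith
      linarith
    rw [← hcr]
    exact mul_nonpos_of_nonneg_of_nonpos hconstnn hcap0
  -- main case : 0 < r < d and 0 < coeff r
  set b : ℕ → ℝ := fun j => p.coeff j / (d.choose j : ℝ) with hb
  have hbnn : ∀ j, 0 ≤ b j := fun j => div_nonneg (hnn j) (Nat.cast_nonneg _)
  have hbpos : ∀ j, r ≤ j → j ≤ d → 0 < b j := by
    intro j h1 h2
    apply div_pos
    · exact my_coeff_pos_mono hp hcard hnn h1 (by omega) hcr
    · exact_mod_cast Nat.choose_pos h2
  have hchoosepos : ∀ j, j ≤ d → (0:ℝ) < (d.choose j : ℝ) := by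
    intro j hj; exact_mod_cast Nat.choose_pos hj
  have newton_b : ∀ k, k + 2 ≤ d → b k * b (k + 2) ≤ b (k + 1) ^ 2 := by
    intro k hk
    have hN := my_newton k p hp hcard hnn (by omega)
    rw [hd] at hN
    have c1 := hchoosepos k (by omega)
    have c2 := hchoosepos (k + 1) (by omega)
    have c3 := hchoosepos (k + 2) (by omega)
    rw [hb]
    rw [div_mul_div_comm, div_pow, div_le_div_iff₀ (by positivity) (by positivity)]
    nlinarith [hN]
  set ρ := b (r + 1) / b r with hρ
  have hbrpos : 0 < b r := hbpos r le_rfl (by omega)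
  have hbr1pos : 0 < b (r + 1) := hbpos (r + 1) (by omega) (by omega)
  have hρpos : 0 < ρ := div_pos hbr1pos hbrpos
  have hρdef : b (r + 1) = ρ * b r := by
    rw [hρ]; field_simp
  -- upward chain
  have up : ∀ j, r ≤ j → j + 1 ≤ d → b (j + 1) ≤ ρ * b j := by
    intro j hj
    induction j, hj using Nat.le_induction with
    | base => intro _; rw [hρdef]
    | succ j hj ih =>
      intro hj2
      have hN := newton_b j (by omega)
      have hbj : 0 < b j := hbpos j hj (by omega)
      have ihj : b (j + 1) ≤ ρ * b j := ih (by omega)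
      have h1 : b j * b (j + 2) ≤ b j * (ρ * b (j + 1)) := by
        nlinarith [hbnn (j + 1)]
      have := le_of_mul_le_mul_left h1 hbj
      calc b (j + 1 + 1) = b (j + 2) := by norm_num
        _ ≤ ρ * b (j + 1) := this
  have upRes : ∀ j, r ≤ j → j ≤ d → b j * ρ ^ r ≤ b r * ρ ^ j := by
    intro j hj
    induction j, hj using Nat.le_induction with
    | base => intro _; exact le_of_eq rfl
    | succ j hj ih =>
      intro hj1
      have h1 : b (j + 1) ≤ ρ * b j := up j hj hj1
      have h2 : b j * ρ ^ r ≤ b r * ρ ^ j := ih (by omega)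
      calc b (j + 1) * ρ ^ r ≤ (ρ * b j) * ρ ^ r :=
            mul_le_mul_of_nonneg_right h1 (by positivity)
        _ = ρ * (b j * ρ ^ r) := by ring
        _ ≤ ρ * (b r * ρ ^ j) := mul_le_mul_of_nonneg_left h2 (le_of_lt hρpos)
        _ = b r * ρ ^ (j + 1) := by ring
  -- downward chain
  have down' : ∀ i, i + 1 ≤ r → ρ * b (r - 1 - i) ≤ b (r - i) := by
    intro i
    induction i with
    | zero =>
      intro h1
      have hN := newton_b (r - 1) (by omega)
      have e1 : r - 1 + 1 = r := by omega
      have e2 : r - 1 + 2 = r + 1 := by omega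
      rw [e1, e2, hρdef] at hN
      have h2 : (ρ * b (r - 1)) * b r ≤ b r * b r := by nlinarith
      have := le_of_mul_le_mul_right h2 hbrpos
      simpa using this
    | succ i ih =>
      intro h1
      have ihi : ρ * b (r - 1 - i) ≤ b (r - i) := ih (by omega)
      have hN := newton_b (r - 2 - i) (by omega)
      have e1 : r - 2 - i + 1 = r - 1 - i := by omega
      have e2 : r - 2 - i + 2 = r - i := by omega
      rw [e1, e2] at hN
      have e3 : r - 1 - (i + 1) = r - 2 - i := by omega
      have e4 : r - (i + 1) = r - 1 - i := by omega
      rw [e3, e4]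
      rcases (hbnn (r - i)).eq_or_lt with h0 | h0
      · -- b (r - i) = 0, then b (r-1-i) = 0 and b (r-2-i) = 0
        have hb1 : b (r - 1 - i) = 0 := by nlinarith [hbnn (r - 1 - i)]
        have hb2 : b (r - 2 - i) = 0 := by
          by_contra hc
          have hpos : 0 < p.coeff (r - 2 - i) := by
            rcases (hnn (r - 2 - i)).lt_or_eq with h' | h'
            · exact h'
            · exfalso; apply hc; rw [hb]; simp [← h']
          have := my_coeff_pos_mono hp hcard hnn
            (show r - 2 - i ≤ r - 1 - i by omega) (by omega) hpos
          have hb1' : 0 < b (r - 1 - i) := div_pos this (hchoosepos _ (by omega))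
          rw [hb1] at hb1'
          exact lt_irrefl _ hb1'
        rw [hb2, hb1, mul_zero]
      · -- b (r - i) > 0
        have h2 : (ρ * b (r - 2 - i)) * b (r - i) ≤ b (r - 1 - i) * b (r - i) := by
          nlinarith [hbnn (r - 1 - i)]
        exact le_of_mul_le_mul_right h2 h0
  have downRes : ∀ i, i ≤ r → b (r - i) * ρ ^ i ≤ b r := by
    intro i
    induction i with
    | zero => intro _; norm_num
    | succ i ih =>
      intro h1
      have hdn : ρ * b (r - 1 - i) ≤ b (r - i) := down' i (by omega)
      have e4 : r - (i + 1) = r - 1 - i := by omega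
      rw [e4]
      calc b (r - 1 - i) * ρ ^ (i + 1) = (ρ * b (r - 1 - i)) * ρ ^ i := by ring
        _ ≤ b (r - i) * ρ ^ i := mul_le_mul_of_nonneg_right hdn (by positivity)
        _ ≤ b r := ih (by omega)
  have full : ∀ j, j ≤ d → b j * ρ ^ r ≤ b r * ρ ^ j := by
    intro j hj
    rcases le_or_gt r j with h1 | h1
    · exact upRes j h1 hj
    · have h2 := downRes (r - j) (by omega)
      have e1 : r - (r - j) = j := by omega
      rw [e1] at h2
      have h3 : (b j * ρ ^ (r - j)) * ρ ^ j ≤ b r * ρ ^ j :=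
        mul_le_mul_of_nonneg_right h2 (by positivity)
      calc b j * ρ ^ r = (b j * ρ ^ (r - j)) * ρ ^ j := by
            rw [mul_assoc, ← pow_add, show r - j + j = r from by omega]
        _ ≤ b r * ρ ^ j := h3
  -- optimization
  set dr := ((d - r : ℕ) : ℝ) with hdrdef
  have hdr : dr = (d : ℝ) - r := by rw [hdrdef, Nat.cast_sub (by omega)]
  have hdrpos : 0 < dr := by
    rw [hdrdef]
    exact_mod_cast Nat.sub_pos_of_lt hrd
  have hrR : (0:ℝ) < r := by exact_mod_cast hrpos
  have hdR : (0:ℝ) < d := by exact_mod_cast (by omega : 0 < d)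
  set t := (r : ℝ) / (ρ * dr) with htdef
  have htpos : 0 < t := div_pos hrR (mul_pos hρpos hdrpos)
  set η := ρ * t with hηdef
  have hη : η = (r : ℝ) / dr := by
    rw [hηdef, htdef]
    field_simp
  have hηpos : 0 < η := by rw [hη]; positivity
  have hco : ∀ i, i ≤ d → p.coeff i = (d.choose i : ℝ) * b i := by
    intro i hi
    rw [hb]
    exact (mul_div_cancel₀ _ (ne_of_gt (hchoosepos i hi))).symm
  have key : p.eval t * ρ ^ r ≤ b r * (η + 1) ^ d := by
    rw [heval t, Finset.sum_mul]
    have hstep : ∀ i ∈ Finset.range (d + 1),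
        p.coeff i * t ^ i * ρ ^ r ≤ η ^ i * 1 ^ (d - i) * (d.choose i : ℝ) * b r := by
      intro i hi
      have hid : i ≤ d := by have := Finset.mem_range.mp hi; omega
      rw [hco i hid, one_pow, hηdef, mul_pow]
      calc (d.choose i : ℝ) * b i * t ^ i * ρ ^ r
          = ((d.choose i : ℝ) * t ^ i) * (b i * ρ ^ r) := by ring
        _ ≤ ((d.choose i : ℝ) * t ^ i) * (b r * ρ ^ i) := by
            apply mul_le_mul_of_nonneg_left (full i hid) (by positivity)
        _ = ρ ^ i * t ^ i * 1 * (d.choose i : ℝ) * b r := by ring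
    calc ∑ i ∈ Finset.range (d + 1), p.coeff i * t ^ i * ρ ^ r
        ≤ ∑ i ∈ Finset.range (d + 1), η ^ i * 1 ^ (d - i) * (d.choose i : ℝ) * b r := by
          exact Finset.sum_le_sum hstep
      _ = (∑ i ∈ Finset.range (d + 1), η ^ i * 1 ^ (d - i) * (d.choose i : ℝ)) * b r := by
          rw [Finset.sum_mul]
      _ = (η + 1) ^ d * b r := by rw [add_pow]
      _ = b r * (η + 1) ^ d := by ring
  have hcapt := hcap t htpos
  have hcombo : cap * η ^ r ≤ b r * (η + 1) ^ d := by
    have h1 : cap * t ^ r * ρ ^ r ≤ p.eval t * ρ ^ r :=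
      mul_le_mul_of_nonneg_right hcapt (by positivity)
    have h2 : cap * t ^ r * ρ ^ r = cap * η ^ r := by
      rw [hηdef, mul_pow]; ring
    linarith [h2 ▸ le_trans h1 key]
  have hη1 : η + 1 = (d : ℝ) / dr := by
    rw [hη]
    rw [show ((r:ℝ)/dr + 1) = ((r:ℝ) + dr)/dr from by rw [add_div, div_self (ne_of_gt hdrpos)], hdr]
    congr 1
    ring
  rw [hη1, hη] at hcombo
  -- cap ≤ b r * (d/dr)^d * (dr/r)^r
  have hcap' : cap ≤ b r * ((d : ℝ) / dr) ^ d * (dr / (r : ℝ)) ^ r := by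
    have hpow : (0:ℝ) < ((r : ℝ) / dr) ^ r := by positivity
    have h3 := (div_le_div_iff_of_pos_right hpow).mpr hcombo
    rw [mul_div_cancel_right₀ _ (ne_of_gt hpow)] at h3
    calc cap ≤ b r * ((d : ℝ) / dr) ^ d / ((r : ℝ) / dr) ^ r := h3
      _ = b r * ((d : ℝ) / dr) ^ d * (dr / (r : ℝ)) ^ r := by
          rw [div_pow, div_pow, div_pow]
          field_simp
          try ring
  -- final constant algebra
  have hX : ((r : ℝ) / d) ^ r * (dr / d) ^ (d - r) * (((d : ℝ) / dr) ^ d * (dr / (r : ℝ)) ^ r)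
      = 1 := by
    have e1 : ((r : ℝ) / d) ^ r * (dr / (r : ℝ)) ^ r = (dr / d) ^ r := by
      rw [← mul_pow]
      congr 1
      field_simp
    have e2 : (dr / (d:ℝ)) ^ (d - r) * (dr / d) ^ r = (dr / d) ^ d := by
      rw [← pow_add]
      congr 1
      omega
    have e3 : (dr / (d:ℝ)) ^ d * ((d : ℝ) / dr) ^ d = 1 := by
      rw [← mul_pow]
      rw [show dr / (d:ℝ) * ((d:ℝ) / dr) = 1 from by field_simp]
      rw [one_pow]
    calc ((r : ℝ) / d) ^ r * (dr / d) ^ (d - r) * (((d : ℝ) / dr) ^ d * (dr / (r : ℝ)) ^ r)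
        = (((r : ℝ) / d) ^ r * (dr / (r : ℝ)) ^ r) * (dr / d) ^ (d - r) *
            ((d : ℝ) / dr) ^ d := by ring
      _ = ((dr / d) ^ r * (dr / d) ^ (d - r)) * ((d : ℝ) / dr) ^ d := by rw [e1]; try ring
      _ = (dr / d) ^ d * ((d : ℝ) / dr) ^ d := by rw [mul_comm ((dr/d)^r) _, e2]
      _ = 1 := e3
  have hKnn : (0:ℝ) ≤ (d.choose r : ℝ) * ((r : ℝ) / d) ^ r * (dr / d) ^ (d - r) := hconstnn
  calc (d.choose r : ℝ) * ((r : ℝ) / d) ^ r * (dr / d) ^ (d - r) * cap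
      ≤ (d.choose r : ℝ) * ((r : ℝ) / d) ^ r * (dr / d) ^ (d - r) *
          (b r * ((d : ℝ) / dr) ^ d * (dr / (r : ℝ)) ^ r) :=
        mul_le_mul_of_nonneg_left hcap' hKnn
    _ = (d.choose r : ℝ) * b r *
          (((r : ℝ) / d) ^ r * (dr / d) ^ (d - r) * (((d : ℝ) / dr) ^ d * (dr / (r:ℝ)) ^ r)) := by
        ring
    _ = (d.choose r : ℝ) * b r := by rw [hX, mul_one]
    _ = p.coeff r := (hco r (by omega)).symm

open Polynomial

lemma my_abs_multiset_prod (s : Multiset ℂ) :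
    norm s.prod = (s.map norm).prod := by
  induction s using Multiset.induction_on with
  | empty => simp
  | cons a s ih => simp [Multiset.prod_cons, map_mul, ih]

lemma my_prod_map_le (s : Multiset ℂ) (f g : ℂ → ℝ) (h : ∀ x ∈ s, 0 ≤ f x)
    (hle : ∀ x ∈ s, f x ≤ g x) : (s.map f).prod ≤ (s.map g).prod := by
  induction s using Multiset.induction_on with
  | empty => simp
  | cons a s ih =>
    rw [Multiset.map_cons, Multiset.map_cons, Multiset.prod_cons, Multiset.prod_cons]
    have hfa := h a (Multiset.mem_cons_self a s)
    have hga := hle a (Multiset.mem_cons_self a s)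
    have hfprod : 0 ≤ (s.map f).prod := by
      apply Multiset.prod_nonneg
      intro x hx
      rcases Multiset.mem_map.mp hx with ⟨y, hy, rfl⟩
      exact h y (Multiset.mem_cons_of_mem hy)
    exact mul_le_mul hga
      (ih (fun x hx => h x (Multiset.mem_cons_of_mem hx))
        (fun x hx => hle x (Multiset.mem_cons_of_mem hx)))
      hfprod (le_trans hfa hga)

/-- A polynomial with no roots in a closed ball: its values on the ball are bounded by `2^D`
times the value at the center. -/
lemma my_poly_bound {D : ℕ} {g : Polynomial ℂ} (hdeg : g.natDegree ≤ D) {z₀ z : ℂ} {δ : ℝ}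
    (hroots : ∀ w ∈ Metric.closedBall z₀ δ, g.eval w ≠ 0)
    (hz : z ∈ Metric.closedBall z₀ δ) :
    norm (g.eval z) ≤ 2 ^ D * norm (g.eval z₀) := by
  rcases eq_or_ne g 0 with rfl | hg
  · simp
  have hδ0 : 0 ≤ δ := by
    by_contra hc
    push_neg at hc
    rw [Metric.closedBall_eq_empty.mpr hc] at hz
    exact absurd hz (Set.notMem_empty z)
  have heq := (IsAlgClosed.splits g).eq_prod_roots
  have habs : ∀ w : ℂ, norm (g.eval w) =
      norm g.leadingCoeff * ((g.roots.map fun a => norm (w - a)).prod) := by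
    intro w
    conv_lhs => rw [heq]
    rw [Polynomial.eval_mul, Polynomial.eval_C, norm_mul, Polynomial.eval_multiset_prod,
      Multiset.map_map, my_abs_multiset_prod, Multiset.map_map]
    congr 2
    apply Multiset.map_congr rfl
    intro a _
    simp
  have hrootsout : ∀ a ∈ g.roots, δ < norm (z₀ - a) := by
    intro a ha
    have hroot : g.eval a = 0 := ((Polynomial.mem_roots hg).mp ha)
    have : a ∉ Metric.closedBall z₀ δ := fun hmem => hroots a hmem hroot
    rw [Metric.mem_closedBall, not_le, Complex.dist_eq] at this
    rwa [norm_sub_rev] at this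
  have hptwise : ∀ a ∈ g.roots, norm (z - a) ≤ 2 * norm (z₀ - a) := by
    intro a ha
    have h1 : norm (z - a) ≤ norm (z - z₀) + norm (z₀ - a) := by
      have := norm_add_le (z - z₀) (z₀ - a)
      simpa using this
    have h2 : norm (z - z₀) ≤ δ := by
      rw [Metric.mem_closedBall, Complex.dist_eq] at hz
      exact hz
    have h3 := hrootsout a ha
    linarith
  have hprodle : (g.roots.map fun a => norm (z - a)).prod ≤
      (g.roots.map fun a => 2 * norm (z₀ - a)).prod := by
    apply my_prod_map_le
    · intro x _; exact norm_nonneg _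
    · exact hptwise
  have hsplit2 : (g.roots.map fun a => 2 * norm (z₀ - a)).prod =
      2 ^ Multiset.card g.roots * (g.roots.map fun a => norm (z₀ - a)).prod := by
    rw [Multiset.prod_map_mul]
    congr 1
    rw [Multiset.map_const', Multiset.prod_replicate]
  have hcard : (2:ℝ) ^ Multiset.card g.roots ≤ 2 ^ D := by
    apply pow_le_pow_right₀ one_le_two
    exact le_trans (Polynomial.card_roots' g) hdeg
  have hprodnn : 0 ≤ (g.roots.map fun a => norm (z₀ - a)).prod := by
    apply Multiset.prod_nonneg
    intro x hx
    rcases Multiset.mem_map.mp hx with ⟨y, hy, rfl⟩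
    exact norm_nonneg _
  rw [habs z, habs z₀]
  calc norm g.leadingCoeff * (g.roots.map fun a => norm (z - a)).prod
      ≤ norm g.leadingCoeff * (2 ^ Multiset.card g.roots *
          (g.roots.map fun a => norm (z₀ - a)).prod) := by
        apply mul_le_mul_of_nonneg_left _ (norm_nonneg _)
        rw [← hsplit2]
        exact hprodle
    _ ≤ norm g.leadingCoeff * (2 ^ D *
          (g.roots.map fun a => norm (z₀ - a)).prod) := by
        apply mul_le_mul_of_nonneg_left _ (norm_nonneg _)
        exact mul_le_mul_of_nonneg_right hcard hprodnn
    _ = 2 ^ D * (norm g.leadingCoeff *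
          (g.roots.map fun a => norm (z₀ - a)).prod) := by ring

/-- Hurwitz-type theorem for polynomials: a pointwise limit of polynomials of bounded degree
without zeros on a closed ball, vanishing at the center, is identically zero. -/
lemma my_hurwitz {D : ℕ} (G : ℕ → Polynomial ℂ) (f : Polynomial ℂ)
    (hdeg : ∀ j, (G j).natDegree ≤ D) (z₀ : ℂ) {δ : ℝ} (hδ : 0 < δ)
    (hne : ∀ j, ∀ z ∈ Metric.closedBall z₀ δ, (G j).eval z ≠ 0)
    (hconv : ∀ z ∈ Metric.closedBall z₀ δ,
      Filter.Tendsto (fun j => (G j).eval z) Filter.atTop (nhds (f.eval z)))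
    (hroot : f.eval z₀ = 0) : f = 0 := by
  have hz0m : z₀ ∈ Metric.closedBall z₀ δ := Metric.mem_closedBall_self (le_of_lt hδ)
  have hzero : ∀ z ∈ Metric.closedBall z₀ δ, f.eval z = 0 := by
    intro z hz
    have h1 : Filter.Tendsto (fun j => norm ((G j).eval z)) Filter.atTop
        (nhds (norm (f.eval z))) :=
      (continuous_norm.tendsto _).comp (hconv z hz)
    have h3 : Filter.Tendsto (fun j => 2 ^ D * norm ((G j).eval z₀)) Filter.atTop
        (nhds 0) := by
      have := (continuous_norm.tendsto _).comp (hconv z₀ hz0m)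
      rw [hroot] at this
      simpa using (this.const_mul ((2:ℝ) ^ D))
    have h2 : ∀ j, norm ((G j).eval z) ≤ 2 ^ D * norm ((G j).eval z₀) :=
      fun j => my_poly_bound (hdeg j) (hne j) hz
    have habs0 : norm (f.eval z) ≤ 0 := le_of_tendsto_of_tendsto' h1 h3 h2
    have := norm_nonneg (f.eval z)
    have habs : norm (f.eval z) = 0 := le_antisymm habs0 this
    exact norm_eq_zero.mp habs
  apply Polynomial.eq_zero_of_infinite_isRoot
  refine Set.infinite_of_injective_forall_mem
    (f := fun k : ℕ => z₀ + ((δ / (k + 1) : ℝ) : ℂ)) ?_ ?_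
  · intro a b hab
    simp only [add_right_inj, Complex.ofReal_inj] at hab
    have ha : ((a:ℝ) + 1) ≠ 0 := by positivity
    have hb : ((b:ℝ) + 1) ≠ 0 := by positivity
    rw [div_eq_div_iff ha hb] at hab
    have h2 : (a : ℝ) = (b : ℝ) := by
      have := mul_left_cancel₀ (ne_of_gt hδ) (by linarith [hab] : δ * ((b:ℝ) + 1) = δ * ((a:ℝ) + 1))
      linarith
    exact_mod_cast h2
  · intro k
    apply hzero
    rw [Metric.mem_closedBall, Complex.dist_eq]
    have : norm ((δ / (k + 1) : ℝ) : ℂ) = δ / (k + 1) := by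
      rw [Complex.norm_of_nonneg (by positivity)]
    simp only [add_sub_cancel_left, this]
    rw [div_le_iff₀ (by positivity : (0:ℝ) < (k:ℝ) + 1)]
    nlinarith [hδ, (by exact_mod_cast Nat.zero_le k : (0:ℝ) ≤ (k:ℝ))]

/-- A real polynomial with nonnegative coefficients whose complexification has no zeros in the
upper half plane is real-rooted. -/
lemma my_realrooted_of_stable {p : Polynomial ℝ} (hp : p ≠ 0) (hnn : ∀ i, 0 ≤ p.coeff i)
    (hstab : ∀ z : ℂ, 0 < z.im → (p.map Complex.ofRealHom).eval z ≠ 0) :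
    Multiset.card p.roots = p.natDegree := by
  set pc := p.map Complex.ofRealHom with hpc
  have hinj : Function.Injective ⇑(Complex.ofRealHom) := Complex.ofReal_injective
  have hpcne : pc ≠ 0 := by
    rw [hpc]
    exact fun h => hp (Polynomial.map_injective _ hinj (by simpa using h))
  -- roots of pc are real
  have hreal : ∀ w ∈ pc.roots, w.im = 0 := by
    intro w hw
    have hblue : pc.eval w = 0 := (Polynomial.mem_roots hpcne).mp hw
    rcases lt_trichotomy w.im 0 with hlt | heq | hgt
    · -- then conj w is a root with positive imaginary part
      exfalso
      have hconj : pc.eval ((starRingEnd ℂ) w) = 0 := by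
        rw [hpc, Polynomial.eval_map] at hblue ⊢
        have := Polynomial.hom_eval₂ p Complex.ofRealHom
          ((starRingEnd ℂ) : ℂ →+* ℂ) w
        rw [hblue, map_zero] at this
        have hcomp : ((starRingEnd ℂ) : ℂ →+* ℂ).comp Complex.ofRealHom =
            Complex.ofRealHom := by
          ext x
          exact Complex.conj_ofReal x
        rw [hcomp] at this
        exact this.symm
      exact hstab _ (by simpa using (by linarith : 0 < -w.im)) hconj
    · exact heq
    · exact absurd hblue (hstab w hgt)
  -- roots of pc written as a real multiset
  set lams := pc.roots.map Complex.re with hlams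
  have hrootseq : pc.roots = lams.map (Complex.ofReal) := by
    rw [hlams, Multiset.map_map]
    have : pc.roots.map ((Complex.ofReal : ℝ → ℂ) ∘ Complex.re) = pc.roots.map id := by
      apply Multiset.map_congr rfl
      intro w hw
      exact Complex.ext (by simp) (by simp [hreal w hw])
    rw [this, Multiset.map_id]
  have heq := (IsAlgClosed.splits pc).eq_prod_roots
  have hlcmap : pc.leadingCoeff = Complex.ofReal p.leadingCoeff := by
    rw [hpc]
    exact Polynomial.leadingCoeff_map_of_injective hinj p
  have hfact : pc = Polynomial.map Complex.ofRealHom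
      (Polynomial.C p.leadingCoeff * (lams.map fun a => X - C a).prod) := by
    rw [Polynomial.map_mul, Polynomial.map_C, Polynomial.map_multiset_prod, Multiset.map_map]
    rw [heq, hlcmap, hrootseq, Multiset.map_map]
    apply congrArg (fun q => Polynomial.C ((p.leadingCoeff : ℂ)) * q)
    apply congrArg Multiset.prod
    apply Multiset.map_congr rfl
    intro a _
    simp [Polynomial.map_sub]
  have hfactR : p = Polynomial.C p.leadingCoeff * (lams.map fun a => X - C a).prod :=
    Polynomial.map_injective _ hinj (by rw [← hfact, hpc])
  have hlcne : p.leadingCoeff ≠ 0 := Polynomial.leadingCoeff_ne_zero.mpr hp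
  have hrootsR : p.roots = lams := by
    rw [hfactR, Polynomial.roots_C_mul _ hlcne, Polynomial.roots_multiset_prod_X_sub_C]
  have hdegR : p.natDegree = Multiset.card lams := by
    conv_lhs => rw [hfactR]
    rw [Polynomial.natDegree_C_mul hlcne, Polynomial.natDegree_multiset_prod_X_sub_C_eq_card]
  rw [hrootsR, hdegR]

open Polynomial

lemma my_mv_eval_nonneg {k : ℕ} (q : MvPolynomial (Fin k) ℝ) (hq : ∀ m, 0 ≤ q.coeff m)
    (x : Fin k → ℝ) (hx : ∀ i, 0 ≤ x i) : 0 ≤ MvPolynomial.eval x q := by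
  rw [MvPolynomial.eval_eq]
  apply Finset.sum_nonneg
  intro m _
  exact mul_nonneg (hq m) (Finset.prod_nonneg fun i _ => pow_nonneg (hx i) _)

lemma my_mv_eval_pos {k : ℕ} (q : MvPolynomial (Fin k) ℝ) (hq0 : q ≠ 0)
    (hq : ∀ m, 0 ≤ q.coeff m) (x : Fin k → ℝ) (hx : ∀ i, 0 < x i) :
    0 < MvPolynomial.eval x q := by
  rw [MvPolynomial.eval_eq]
  apply Finset.sum_pos
  · intro m hm
    apply mul_pos
    · exact (hq m).lt_of_ne (Ne.symm (MvPolynomial.mem_support_iff.mp hm))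
    · exact Finset.prod_pos fun i _ => pow_pos (hx i) _
  · exact MvPolynomial.support_nonempty.mpr hq0

/-- commute `finSuccEquiv` with coefficient maps to `ℂ`. -/
lemma my_finSuccEquiv_map (n : ℕ) (P : MvPolynomial (Fin (n + 1)) ℝ) :
    MvPolynomial.finSuccEquiv ℂ n (MvPolynomial.map Complex.ofRealHom P) =
      Polynomial.map (MvPolynomial.map Complex.ofRealHom :
        MvPolynomial (Fin n) ℝ →+* MvPolynomial (Fin n) ℂ)
        (MvPolynomial.finSuccEquiv ℝ n P) := by
  apply Polynomial.ext
  intro i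
  apply MvPolynomial.ext
  intro m
  rw [MvPolynomial.finSuccEquiv_coeff_coeff, Polynomial.coeff_map, MvPolynomial.coeff_map,
    MvPolynomial.coeff_map, MvPolynomial.finSuccEquiv_coeff_coeff]

lemma my_mv_eval_ofReal {k : ℕ} (q : MvPolynomial (Fin k) ℝ) (x : Fin k → ℝ) :
    (Complex.ofRealHom (MvPolynomial.eval x q) : ℂ) =
      MvPolynomial.eval (fun i => (x i : ℂ)) (MvPolynomial.map Complex.ofRealHom q) := by
  rw [MvPolynomial.eval_map]
  rw [show MvPolynomial.eval x q = MvPolynomial.eval₂ (RingHom.id ℝ) x q from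
    (MvPolynomial.eval₂_id q).symm]
  rw [MvPolynomial.eval₂_comp_left Complex.ofRealHom (RingHom.id ℝ) x q]
  rw [RingHom.comp_id]
  rfl

/-- Restriction of a stable polynomial to positive real values of variables `1..n` is stable
as a univariate complex polynomial (given it is nonzero). -/
lemma my_stab_restrict (n : ℕ) (P : MvPolynomial (Fin (n + 1)) ℝ)
    (hstable : ∀ z : Fin (n + 1) → ℂ, (∀ i, 0 < (z i).im) → MvPolynomial.aeval z P ≠ 0)
    (x' : Fin n → ℝ)
    (hpne : Polynomial.map (MvPolynomial.eval x') (MvPolynomial.finSuccEquiv ℝ n P) ≠ 0) :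
    ∀ z : ℂ, 0 < z.im →
      (Polynomial.map Complex.ofRealHom
        (Polynomial.map (MvPolynomial.eval x') (MvPolynomial.finSuccEquiv ℝ n P))).eval z ≠ 0 := by
  intro z₀ him0 hzero
  set F := MvPolynomial.finSuccEquiv ℝ n P with hF
  set Pc := MvPolynomial.map Complex.ofRealHom P with hPc
  set Fc := MvPolynomial.finSuccEquiv ℂ n Pc with hFc
  have hFcmap : Fc = Polynomial.map (MvPolynomial.map Complex.ofRealHom :
      MvPolynomial (Fin n) ℝ →+* MvPolynomial (Fin n) ℂ) F := my_finSuccEquiv_map n P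
  set D := F.natDegree with hD
  set f := Polynomial.map Complex.ofRealHom (Polynomial.map (MvPolynomial.eval x') F) with hf
  -- f as an evaluation of Fc
  have hfeval : f = Polynomial.map
      (MvPolynomial.eval (fun i => (x' i : ℂ)) : MvPolynomial (Fin n) ℂ →+* ℂ) Fc := by
    apply Polynomial.ext
    intro i
    rw [hf, Polynomial.coeff_map, Polynomial.coeff_map, Polynomial.coeff_map, hFcmap,
      Polynomial.coeff_map]
    exact my_mv_eval_ofReal (F.coeff i) x'
  -- the approximating family
  set y : ℕ → Fin n → ℂ := fun j i => (x' i : ℂ) + ((1 / (j + 1 : ℝ) : ℝ) : ℂ) * Complex.I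
    with hy
  set G : ℕ → Polynomial ℂ := fun j => Polynomial.map
    (MvPolynomial.eval (y j) : MvPolynomial (Fin n) ℂ →+* ℂ) Fc with hG
  have hδ : 0 < z₀.im / 2 := by linarith
  -- evaluation identity
  have hGeval : ∀ j z, (G j).eval z = MvPolynomial.aeval (Fin.cons z (y j)) P := by
    intro j z
    rw [hG]
    rw [← MvPolynomial.eval_eq_eval_mv_eval' (y j) z Pc]
    rw [hPc, MvPolynomial.eval_map, MvPolynomial.aeval_def]
    rfl
  have hyim : ∀ j i, 0 < ((y j) i).im := by
    intro j i
    rw [hy]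
    simp only [Complex.add_im, Complex.ofReal_im, Complex.mul_I_im, Complex.ofReal_re, zero_add]
    positivity
  -- no roots on the ball
  have hne : ∀ j, ∀ z ∈ Metric.closedBall z₀ (z₀.im / 2), (G j).eval z ≠ 0 := by
    intro j z hz
    rw [hGeval]
    apply hstable
    intro i
    refine Fin.cases ?_ ?_ i
    · rw [Fin.cons_zero]
      rw [Metric.mem_closedBall, Complex.dist_eq] at hz
      have h1 : |z.im - z₀.im| ≤ norm (z - z₀) := by
        rw [← Complex.sub_im]
        exact Complex.abs_im_le_norm _
      have h2 : |z.im - z₀.im| ≤ z₀.im / 2 := le_trans h1 hz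
      have h3 := abs_le.mp h2
      linarith [h3.1]
    · intro k
      rw [Fin.cons_succ]
      exact hyim j k
  -- degrees
  have hdeg : ∀ j, (G j).natDegree ≤ D := by
    intro j
    rw [hG]
    refine le_trans Polynomial.natDegree_map_le ?_
    rw [hFcmap]
    exact Polynomial.natDegree_map_le
  have hfdeg : f.natDegree ≤ D := by
    rw [hfeval]
    refine le_trans Polynomial.natDegree_map_le ?_
    rw [hFcmap]
    exact Polynomial.natDegree_map_le
  -- convergence
  have hconv : ∀ z ∈ Metric.closedBall z₀ (z₀.im / 2),
      Filter.Tendsto (fun j => (G j).eval z) Filter.atTop (nhds (f.eval z)) := by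
    intro z _
    have hGz : ∀ j, (G j).eval z =
        ∑ i ∈ Finset.range (D + 1), MvPolynomial.eval (y j) (Fc.coeff i) * z ^ i := by
      intro j
      rw [Polynomial.eval_eq_sum_range' (lt_of_le_of_lt (hdeg j) (Nat.lt_succ_self D))]
      apply Finset.sum_congr rfl
      intro i _
      rw [hG, Polynomial.coeff_map]
    have hfz : f.eval z =
        ∑ i ∈ Finset.range (D + 1),
          MvPolynomial.eval (fun i => (x' i : ℂ)) (Fc.coeff i) * z ^ i := by
      rw [Polynomial.eval_eq_sum_range' (lt_of_le_of_lt hfdeg (Nat.lt_succ_self D))]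
      apply Finset.sum_congr rfl
      intro i _
      rw [hfeval, Polynomial.coeff_map]
    simp only [hGz, hfz]
    apply tendsto_finset_sum
    intro i _
    apply Filter.Tendsto.mul_const
    -- continuity in ε
    have hcont : Continuous (fun ε : ℝ =>
        MvPolynomial.eval (fun k => (x' k : ℂ) + (ε : ℂ) * Complex.I) (Fc.coeff i)) := by
      apply (MvPolynomial.continuous_eval (Fc.coeff i)).comp
      apply continuous_pi
      intro k
      exact continuous_const.add (Complex.continuous_ofReal.mul continuous_const)
    have h0 : Filter.Tendsto (fun j : ℕ => (1 / ((j : ℝ) + 1) : ℝ)) Filter.atTop (nhds 0) :=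
      tendsto_one_div_add_atTop_nhds_zero_nat
    have := (hcont.tendsto 0).comp h0
    simp only [Function.comp_def] at this
    have hval : (fun k => (x' k : ℂ) + ((0:ℝ) : ℂ) * Complex.I) = (fun k => (x' k : ℂ)) := by
      funext k
      simp
    rw [hval] at this
    exact this
  -- apply Hurwitz
  have hf0 : f = 0 := my_hurwitz G f hdeg z₀ hδ hne hconv hzero
  apply hpne
  have : Polynomial.map Complex.ofRealHom (Polynomial.map (MvPolynomial.eval x') F) = 0 := hf0
  have hinj : Function.Injective ⇑(Complex.ofRealHom) := Complex.ofReal_injective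
  exact Polynomial.map_injective _ hinj (by simpa using this)

/-- Capacity preservation under taking a coefficient in the first variable of
a real stable polynomial with nonnegative coefficients. -/
theorem stmt_10 (n : ℕ) (P : MvPolynomial (Fin (n + 1)) ℝ)
    (hstable : ∀ z : Fin (n + 1) → ℂ, (∀ i, 0 < (z i).im) → MvPolynomial.aeval z P ≠ 0)
    (hcoeff : ∀ m, 0 ≤ P.coeff m)
    (d r : ℕ) (hd : (MvPolynomial.finSuccEquiv ℝ n P).natDegree = d) (hr : r ≤ d)
    (α : Fin (n + 1) → ℝ) (hα : ∀ i, 0 ≤ α i) (hα0 : α 0 = (r : ℝ)) :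
    (d.choose r : ℝ) * ((r : ℝ) / d) ^ r * (((d - r : ℕ) : ℝ) / d) ^ (d - r) *
        (⨅ x : {x : Fin (n + 1) → ℝ // ∀ i, 0 < x i},
          MvPolynomial.eval x.1 P / ∏ i, (x.1 i) ^ (α i))
      ≤ ⨅ x : {x : Fin n → ℝ // ∀ i, 0 < x i},
          MvPolynomial.eval x.1 ((MvPolynomial.finSuccEquiv ℝ n P).coeff r) /
            ∏ i, (x.1 i) ^ (α i.succ) := by
  classical
  haveI hne1 : Nonempty {x : Fin (n + 1) → ℝ // ∀ i, 0 < x i} :=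
    ⟨⟨fun _ => 1, fun _ => one_pos⟩⟩
  haveI hne2 : Nonempty {x : Fin n → ℝ // ∀ i, 0 < x i} :=
    ⟨⟨fun _ => 1, fun _ => one_pos⟩⟩
  by_cases hP0 : P = 0
  · subst hP0
    simp only [map_zero, Polynomial.coeff_zero, zero_div, ciInf_const, mul_zero]
    exact le_refl 0
  set F := MvPolynomial.finSuccEquiv ℝ n P with hF
  have hFne : F ≠ 0 := by
    intro h
    apply hP0
    apply (MvPolynomial.finSuccEquiv ℝ n).injective
    rw [map_zero]
    rw [← hF, h]
  have hFcoeffnn : ∀ i : ℕ, ∀ m, 0 ≤ ((F.coeff i)).coeff m := by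
    intro i m
    rw [hF, MvPolynomial.finSuccEquiv_coeff_coeff]
    exact hcoeff _
  set L := ⨅ x : {x : Fin (n + 1) → ℝ // ∀ i, 0 < x i},
    MvPolynomial.eval x.1 P / ∏ i, (x.1 i) ^ (α i) with hL
  have hbdd : BddBelow (Set.range fun x : {x : Fin (n + 1) → ℝ // ∀ i, 0 < x i} =>
      MvPolynomial.eval x.1 P / ∏ i, (x.1 i) ^ (α i)) := by
    refine ⟨0, ?_⟩
    rintro v ⟨x, rfl⟩
    apply div_nonneg
    · exact my_mv_eval_nonneg P hcoeff x.1 fun i => le_of_lt (x.2 i)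
    · exact Finset.prod_nonneg fun i _ => le_of_lt (Real.rpow_pos_of_pos (x.2 i) _)
  apply le_ciInf
  intro x'
  set p := Polynomial.map (MvPolynomial.eval x'.1 : MvPolynomial (Fin n) ℝ →+* ℝ) F with hp
  have hpcoeff : ∀ i, p.coeff i = MvPolynomial.eval x'.1 (F.coeff i) := by
    intro i
    rw [hp, Polynomial.coeff_map]
  have hFld : F.coeff d ≠ 0 := by
    rw [← hd, Polynomial.coeff_natDegree]
    exact Polynomial.leadingCoeff_ne_zero.mpr hFne
  have hpd : 0 < p.coeff d := by
    rw [hpcoeff]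
    exact my_mv_eval_pos _ hFld (hFcoeffnn d) x'.1 x'.2
  have hpne : p ≠ 0 := by
    intro h
    rw [h] at hpd
    simp at hpd
  have hpdeg : p.natDegree = d :=
    le_antisymm (le_trans Polynomial.natDegree_map_le hd.le)
      (Polynomial.le_natDegree_of_ne_zero (ne_of_gt hpd))
  have hpnn : ∀ i, 0 ≤ p.coeff i := by
    intro i
    rw [hpcoeff]
    exact my_mv_eval_nonneg _ (hFcoeffnn i) x'.1 fun k => le_of_lt (x'.2 k)
  have hstabp : ∀ z : ℂ, 0 < z.im → (p.map Complex.ofRealHom).eval z ≠ 0 := by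
    intro z hz
    exact my_stab_restrict n P hstable x'.1 (by rw [hp, hF] at hpne; exact hpne) z hz
  have hcard : Multiset.card p.roots = p.natDegree :=
    my_realrooted_of_stable hpne hpnn hstabp
  set Pi' := ∏ i, (x'.1 i) ^ (α i.succ) with hPi
  have hPipos : 0 < Pi' := Finset.prod_pos fun i _ => Real.rpow_pos_of_pos (x'.2 i) _
  have hcap : ∀ t : ℝ, 0 < t → (L * Pi') * t ^ r ≤ p.eval t := by
    intro t ht
    have hmem : ∀ i, 0 < (Fin.cons t x'.1 : Fin (n + 1) → ℝ) i := by
      intro i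
      refine Fin.cases ?_ ?_ i
      · rwa [Fin.cons_zero]
      · intro k
        rw [Fin.cons_succ]
        exact x'.2 k
    have h1 : L ≤ MvPolynomial.eval (Fin.cons t x'.1) P /
        ∏ i, ((Fin.cons t x'.1 : Fin (n + 1) → ℝ) i) ^ (α i) :=
      ciInf_le hbdd ⟨Fin.cons t x'.1, hmem⟩
    have hprod : ∏ i, ((Fin.cons t x'.1 : Fin (n + 1) → ℝ) i) ^ (α i) = t ^ r * Pi' := by
      rw [Fin.prod_univ_succ, Fin.cons_zero, hα0, Real.rpow_natCast]
      simp only [Fin.cons_succ]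
      rfl
    have heval : MvPolynomial.eval (Fin.cons t x'.1) P = p.eval t := by
      rw [MvPolynomial.eval_eq_eval_mv_eval' x'.1 t P, hp]
    rw [hprod, heval] at h1
    have hpos : 0 < t ^ r * Pi' := mul_pos (pow_pos ht r) hPipos
    rw [le_div_iff₀ hpos] at h1
    calc (L * Pi') * t ^ r = L * (t ^ r * Pi') := by ring
      _ ≤ p.eval t := h1
  have hcore := my_core hpne hcard hpnn hpdeg hr (L * Pi') hcap
  rw [← hpcoeff r, le_div_iff₀ hPipos]
  calc (d.choose r : ℝ) * ((r : ℝ) / d) ^ r * (((d - r : ℕ) : ℝ) / d) ^ (d - r) * L * Pi'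
      = (d.choose r : ℝ) * ((r : ℝ) / d) ^ r * (((d - r : ℕ) : ℝ) / d) ^ (d - r) * (L * Pi') := by
        ring
    _ ≤ p.coeff r := hcore
end

section
/- Let G = (A, B, E) be a d-regular bipartite graph on 2n vertices and let α assign value 1 to each vertex of A and value d−1 to each vertex of B. Then inf over positive (x_u)_{u∈A}, (y_v)_{v∈B} of Π_{(u,v)∈E} (x_u + y_v) / (Π_{u∈A} x_u · Π_{v∈B} y_v^{d-1}) equals d^{nd} / (d-1)^{n(d-1)}. -/
open Finset

section Aux

variable {V : Type*} [Fintype V] [DecidableEq V]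
  (G : SimpleGraph V) [DecidableRel G.Adj] (A B : Finset V)

/-- Every edge of a bipartite graph corresponds to a unique pair
`(u, v)` with `u ∈ A` and `v` a neighbour of `u`. -/
lemma aux_prod_edge (hpart : ∀ v, v ∈ A ↔ v ∉ B)
    (hbip : ∀ u v, G.Adj u v → (u ∈ A ↔ v ∈ B))
    (F : Sym2 V → ℝ) :
    ∏ e ∈ G.edgeFinset, F e
      = ∏ p ∈ A.sigma (fun u => G.neighborFinset u), F s(p.1, p.2) := by
  refine (Finset.prod_bij (fun p _ => s(p.1, p.2)) ?_ ?_ ?_ ?_).symm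
  · intro p hp
    rw [Finset.mem_sigma, SimpleGraph.mem_neighborFinset] at hp
    rw [SimpleGraph.mem_edgeFinset, SimpleGraph.mem_edgeSet]
    exact hp.2
  · intro p hp q hq h
    rw [Finset.mem_sigma, SimpleGraph.mem_neighborFinset] at hp hq
    rw [Sym2.eq_iff] at h
    rcases h with ⟨h1, h2⟩ | ⟨h1, h2⟩
    · cases p; cases q; simp_all
    · exfalso
      have hq2B : q.2 ∈ B := (hbip q.1 q.2 hq.2).1 hq.1
      have : q.2 ∉ A := fun hmem => (hpart q.2).1 hmem hq2B
      exact this (h1 ▸ hp.1)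
  · intro e he
    induction e using Sym2.ind with
    | _ a b =>
      rw [SimpleGraph.mem_edgeFinset, SimpleGraph.mem_edgeSet] at he
      by_cases ha : a ∈ A
      · exact ⟨⟨a, b⟩, by
          rw [Finset.mem_sigma, SimpleGraph.mem_neighborFinset]; exact ⟨ha, he⟩, rfl⟩
      · have haB : a ∈ B := by
          by_contra hnb; exact ha ((hpart a).2 hnb)
        have hbA : b ∈ A := (hbip b a he.symm).2 haB
        exact ⟨⟨b, a⟩, by
          rw [Finset.mem_sigma, SimpleGraph.mem_neighborFinset]
          exact ⟨hbA, he.symm⟩, Sym2.eq_swap⟩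
  · intro p _; rfl

/-- Swapping the rôles of the two parts of a bipartite graph. -/
lemma aux_swap (hbip : ∀ u v, G.Adj u v → (u ∈ A ↔ v ∈ B))
    (k : V → ℝ) :
    ∏ p ∈ A.sigma (fun u => G.neighborFinset u), k p.2
      = ∏ p ∈ B.sigma (fun v => G.neighborFinset v), k p.1 := by
  refine Finset.prod_bij (fun p _ => (⟨p.2, p.1⟩ : (_ : V) × V)) ?_ ?_ ?_ ?_
  · intro p hp
    rw [Finset.mem_sigma, SimpleGraph.mem_neighborFinset] at hp ⊢
    exact ⟨(hbip p.1 p.2 hp.2).1 hp.1, hp.2.symm⟩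
  · intro p hp q hq h
    cases p; cases q; simp_all
  · intro q hq
    rw [Finset.mem_sigma, SimpleGraph.mem_neighborFinset] at hq
    refine ⟨⟨q.2, q.1⟩, ?_, rfl⟩
    rw [Finset.mem_sigma, SimpleGraph.mem_neighborFinset]
    exact ⟨(hbip q.2 q.1 hq.2.symm).2 hq.1, hq.2.symm⟩
  · intro p _; rfl

end Aux

/-- For a `d`-regular bipartite graph `G = (A, B, E)` on `2n` vertices, the
capacity of `P_G` with respect to the vector taking value `1` on `A` and
`d - 1` on `B` equals `d^{nd} / (d-1)^{n(d-1)}`. -/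
theorem stmt_15 {V : Type*} [Fintype V] [DecidableEq V]
    (G : SimpleGraph V) [DecidableRel G.Adj]
    (A B : Finset V) (n d : ℕ)
    (hpart : ∀ v, v ∈ A ↔ v ∉ B)
    (hA : A.card = n) (hB : B.card = n)
    (hd : 2 ≤ d)
    (hreg : ∀ v, G.degree v = d)
    (hbip : ∀ u v, G.Adj u v → (u ∈ A ↔ v ∈ B)) :
    (⨅ x : {x : V → ℝ // ∀ v, 0 < x v},
      MvPolynomial.eval x.1
        (∏ e ∈ G.edgeFinset,
          Sym2.lift ⟨fun u v => MvPolynomial.X u + MvPolynomial.X v,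
            fun u v => add_comm _ _⟩ e : MvPolynomial V ℝ) /
        ((∏ u ∈ A, x.1 u) * ∏ v ∈ B, (x.1 v) ^ (d - 1)))
      = (d : ℝ) ^ (n * d) / ((d - 1 : ℕ) : ℝ) ^ (n * (d - 1)) := by
  classical
  set D : ℝ := (d : ℝ) with hD
  have hD2 : (2 : ℝ) ≤ D := by rw [hD]; exact_mod_cast hd
  have hD0 : (0 : ℝ) < D := by linarith
  have hD1 : (0 : ℝ) < D - 1 := by linarith
  have hDne : D ≠ 0 := ne_of_gt hD0
  have hD1ne : D - 1 ≠ 0 := ne_of_gt hD1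
  have hcast : ((d - 1 : ℕ) : ℝ) = D - 1 := by
    rw [hD]; push_cast [Nat.cast_sub (by omega : 1 ≤ d)]; ring
  set S := A.sigma (fun u => G.neighborFinset u) with hS
  set c : ℝ := (d : ℝ) ^ (n * d) / ((d - 1 : ℕ) : ℝ) ^ (n * (d - 1)) with hc
  set num : (V → ℝ) → ℝ := fun x => ∏ p ∈ S, (x p.1 + x p.2) with hnum
  set den : (V → ℝ) → ℝ := fun x =>
    (∏ u ∈ A, x u) * ∏ v ∈ B, (x v) ^ (d - 1) with hden
  -- evaluation of the polynomial
  have heval : ∀ x : V → ℝ,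
      MvPolynomial.eval x
        (∏ e ∈ G.edgeFinset,
          Sym2.lift ⟨fun u v => MvPolynomial.X u + MvPolynomial.X v,
            fun u v => add_comm _ _⟩ e : MvPolynomial V ℝ) = num x := by
    intro x
    rw [map_prod, aux_prod_edge G A B hpart hbip
      (fun e => MvPolynomial.eval x (Sym2.lift ⟨fun u v =>
        MvPolynomial.X u + MvPolynomial.X v, fun u v => add_comm _ _⟩ e))]
    simp [hnum, hS]
  -- membership facts about `S`
  have hSmem : ∀ p ∈ S, p.1 ∈ A ∧ p.2 ∈ B ∧ G.Adj p.1 p.2 := by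
    intro p hp
    rw [hS, Finset.mem_sigma, SimpleGraph.mem_neighborFinset] at hp
    exact ⟨hp.1, (hbip p.1 p.2 hp.2).1 hp.1, hp.2⟩
  -- the positivity of denominators
  have hdenpos : ∀ x : V → ℝ, (∀ v, 0 < x v) → 0 < den x := by
    intro x hx
    apply mul_pos (Finset.prod_pos fun u _ => hx u)
    exact Finset.prod_pos fun v _ => pow_pos (hx v) _
  have hcpos : 0 < c := by
    rw [hc]
    apply div_pos
    · positivity
    · apply pow_pos; rw [hcast]; exact hD1
  -- the key lower bound
  have key : ∀ x : V → ℝ, (∀ v, 0 < x v) → c * den x ≤ num x := by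
    intro x hx
    -- AM-GM per edge
    have amgm : ∀ p ∈ S,
        (D * x p.1) ^ ((1 : ℝ)/D) * ((D/(D-1)) * x p.2) ^ ((D-1)/D)
          ≤ x p.1 + x p.2 := by
      intro p _
      have h1 : (0:ℝ) ≤ 1/D := by positivity
      have h2 : (0:ℝ) ≤ (D-1)/D := by positivity
      have hx1 := hx p.1
      have hx2 := hx p.2
      have h3 : (0:ℝ) ≤ D * x p.1 := by positivity
      have h4 : (0:ℝ) ≤ (D/(D-1)) * x p.2 := by positivity
      have hw : 1/D + (D-1)/D = 1 := by
        rw [← add_div, show (1:ℝ) + (D - 1) = D by ring]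
        exact div_self hDne
      have := Real.geom_mean_le_arith_mean2_weighted h1 h2 h3 h4 hw
      calc (D * x p.1) ^ ((1:ℝ)/D) * ((D/(D-1)) * x p.2) ^ ((D-1)/D)
          ≤ 1/D * (D * x p.1) + (D-1)/D * ((D/(D-1)) * x p.2) := this
        _ = x p.1 + x p.2 := by field_simp
    have step1 :
        ∏ p ∈ S, ((D * x p.1) ^ ((1:ℝ)/D) * ((D/(D-1)) * x p.2) ^ ((D-1)/D))
          ≤ num x := by
      apply Finset.prod_le_prod
      · intro p _
        have hx1 := hx p.1
        have hx2 := hx p.2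
        have : (0:ℝ) ≤ (D * x p.1) ^ ((1:ℝ)/D) := Real.rpow_nonneg (by positivity) _
        have h2 : (0:ℝ) ≤ ((D/(D-1)) * x p.2) ^ ((D-1)/D) :=
          Real.rpow_nonneg (by positivity) _
        exact mul_nonneg this h2
      · exact amgm
    -- compute the left-hand side product
    have hsplit :
        ∏ p ∈ S, ((D * x p.1) ^ ((1:ℝ)/D) * ((D/(D-1)) * x p.2) ^ ((D-1)/D))
          = (∏ p ∈ S, (D * x p.1) ^ ((1:ℝ)/D))
            * ∏ p ∈ S, ((D/(D-1)) * x p.2) ^ ((D-1)/D) :=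
      Finset.prod_mul_distrib
    -- the A-side product
    set PA : ℝ := ∏ u ∈ A, (D * x u) with hPA
    have hPA0 : 0 ≤ PA := Finset.prod_nonneg fun u _ => by have := hx u; positivity
    have hAside : ∏ p ∈ S, (D * x p.1) ^ ((1:ℝ)/D) = PA := by
      rw [Real.finset_prod_rpow _ _ (fun p _ => by have := hx p.1; positivity)]
      have : ∏ p ∈ S, (D * x p.1) = PA ^ d := by
        rw [hPA, hS, Finset.prod_sigma, ← Finset.prod_pow]
        apply Finset.prod_congr rfl
        intro u _
        dsimp only
        rw [Finset.prod_const, SimpleGraph.card_neighborFinset_eq_degree, hreg]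
      rw [this, ← Real.rpow_natCast PA d, ← Real.rpow_mul hPA0]
      rw [show (d : ℝ) * (1/D) = 1 by rw [← hD, mul_one_div]; exact div_self hDne]
      exact Real.rpow_one PA
    -- the B-side product
    set QB : ℝ := ∏ v ∈ B, ((D/(D-1)) * x v) with hQB
    have hQB0 : 0 ≤ QB := Finset.prod_nonneg fun v _ => by have := hx v; positivity
    have hBside : ∏ p ∈ S, ((D/(D-1)) * x p.2) ^ ((D-1)/D) = QB ^ (d - 1) := by
      rw [Real.finset_prod_rpow _ _ (fun p _ => by have := hx p.2; positivity)]
      have : ∏ p ∈ S, ((D/(D-1)) * x p.2) = QB ^ d := by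
        rw [hQB, hS, aux_swap G A B hbip (fun v => (D/(D-1)) * x v),
          Finset.prod_sigma, ← Finset.prod_pow]
        apply Finset.prod_congr rfl
        intro v _
        dsimp only
        rw [Finset.prod_const, SimpleGraph.card_neighborFinset_eq_degree, hreg]
      rw [this, ← Real.rpow_natCast QB d, ← Real.rpow_mul hQB0]
      rw [show (d : ℝ) * ((D-1)/D) = ((d - 1 : ℕ) : ℝ) by
        rw [hcast, ← hD, mul_comm, div_mul_cancel₀ _ hDne]]
      exact Real.rpow_natCast QB (d - 1)
    -- put everything together
    have hPAval : PA = D ^ n * ∏ u ∈ A, x u := by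
      rw [hPA, Finset.prod_mul_distrib, Finset.prod_const, hA]
    have hQBval : QB ^ (d - 1)
        = (D/(D-1)) ^ (n * (d-1)) * ∏ v ∈ B, (x v) ^ (d - 1) := by
      rw [hQB, Finset.prod_mul_distrib, Finset.prod_const, hB, mul_pow,
        ← pow_mul, ← Finset.prod_pow]
    have hconst : D ^ n * (D/(D-1)) ^ (n * (d-1)) = c := by
      have hexp : n * d = n + n * (d - 1) := by
        obtain ⟨k, rfl⟩ : ∃ k, d = k + 1 := ⟨d - 1, by omega⟩
        simp only [Nat.add_sub_cancel]; ring
      rw [hc, hcast, ← hD, hexp, pow_add, div_pow]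
      ring
    calc c * den x = D ^ n * (D/(D-1)) ^ (n * (d-1)) * den x := by rw [hconst]
      _ = PA * QB ^ (d - 1) := by
          rw [hPAval, hQBval]; simp only [hden]; ring
      _ = ∏ p ∈ S, ((D * x p.1) ^ ((1:ℝ)/D) * ((D/(D-1)) * x p.2) ^ ((D-1)/D)) := by
          rw [hsplit, hAside, hBside]
      _ ≤ num x := step1
  -- the minimiser
  set x₀ : V → ℝ := fun v => if v ∈ A then (1:ℝ) else ((d - 1 : ℕ) : ℝ) with hx₀
  have hx₀pos : ∀ v, 0 < x₀ v := by
    intro v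
    by_cases h : v ∈ A
    · simp [hx₀, h]
    · simp only [hx₀, h, if_false]
      rw [hcast]; exact hD1
  have hnum₀ : num x₀ = (d : ℝ) ^ (n * d) := by
    simp only [hnum]
    rw [hS, Finset.prod_sigma]
    dsimp only
    have : ∀ u ∈ A, ∏ v ∈ G.neighborFinset u, (x₀ u + x₀ v) = D ^ d := by
      intro u hu
      have : ∀ v ∈ G.neighborFinset u, x₀ u + x₀ v = D := by
        intro v hv
        rw [SimpleGraph.mem_neighborFinset] at hv
        have hvB : v ∈ B := (hbip u v hv).1 hu
        have hvA : v ∉ A := fun h => (hpart v).1 h hvB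
        rw [hx₀]; simp only [hu, hvA, if_true, if_false]
        rw [hcast]; ring
      rw [Finset.prod_congr rfl this, Finset.prod_const,
        SimpleGraph.card_neighborFinset_eq_degree, hreg]
    rw [Finset.prod_congr rfl this, Finset.prod_const, hA, ← pow_mul, hD,
      mul_comm d n]
  have hden₀ : den x₀ = ((d - 1 : ℕ) : ℝ) ^ (n * (d - 1)) := by
    simp only [hden]
    have h1 : ∏ u ∈ A, x₀ u = 1 := by
      apply Finset.prod_eq_one
      intro u hu; rw [hx₀]; simp [hu]
    have h2 : ∀ v ∈ B, (x₀ v) ^ (d - 1) = ((d - 1 : ℕ) : ℝ) ^ (d - 1) := by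
      intro v hv
      have hvA : v ∉ A := fun h => (hpart v).1 h hv
      rw [hx₀]; simp [hvA]
    rw [h1, one_mul, Finset.prod_congr rfl h2, Finset.prod_const, hB,
      ← pow_mul, mul_comm (d-1) n]
  have hval₀ : num x₀ / den x₀ = c := by
    rw [hnum₀, hden₀, hc]
  -- conclude
  have hlb : ∀ z : {x : V → ℝ // ∀ v, 0 < x v},
      c ≤ MvPolynomial.eval z.1
        (∏ e ∈ G.edgeFinset,
          Sym2.lift ⟨fun u v => MvPolynomial.X u + MvPolynomial.X v,
            fun u v => add_comm _ _⟩ e : MvPolynomial V ℝ) /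
        ((∏ u ∈ A, z.1 u) * ∏ v ∈ B, (z.1 v) ^ (d - 1)) := by
    intro z
    rw [heval z.1]
    have hdz : 0 < (∏ u ∈ A, z.1 u) * ∏ v ∈ B, (z.1 v) ^ (d - 1) :=
      hdenpos z.1 z.2
    rw [le_div_iff₀ hdz]
    calc c * ((∏ u ∈ A, z.1 u) * ∏ v ∈ B, (z.1 v) ^ (d - 1))
        = c * den z.1 := by rw [hden]
      _ ≤ num z.1 := key z.1 z.2
  have hinst : Nonempty {x : V → ℝ // ∀ v, 0 < x v} :=
    ⟨⟨fun _ => 1, fun _ => one_pos⟩⟩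
  apply le_antisymm
  · have hle := ciInf_le (f := fun z : {x : V → ℝ // ∀ v, 0 < x v} =>
      MvPolynomial.eval z.1
        (∏ e ∈ G.edgeFinset,
          Sym2.lift ⟨fun u v => MvPolynomial.X u + MvPolynomial.X v,
            fun u v => add_comm _ _⟩ e : MvPolynomial V ℝ) /
        ((∏ u ∈ A, z.1 u) * ∏ v ∈ B, (z.1 v) ^ (d - 1)))
      ⟨c, by rintro y ⟨z, rfl⟩; exact hlb z⟩ ⟨x₀, hx₀pos⟩
    calc _ ≤ _ := hle
      _ = c := by rw [heval x₀]; exact hval₀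
  · exact le_ciInf hlb
end

section
/- Let G be a finite graph with all vertex degrees even, and let α_v = d_v/2 where d_v is the degree of v. Then the α-capacity of P_G(x) = Π_{(u,v)∈E}(x_u + x_v), i.e., inf_{x > 0} Π_{(u,v)∈E}(x_u + x_v) / Π_v x_v^{d_v/2}, equals 2^{|E(G)|}. -/
open Finset

lemma dart_prod_eq_vertex_prod {V : Type*} [Fintype V] [DecidableEq V]
    (G : SimpleGraph V) [DecidableRel G.Adj] (x : V → ℝ) :
    (∏ d : G.Dart, x d.fst) = ∏ v, x v ^ G.degree v := by
  rw [← Finset.prod_fiberwise_of_maps_to (g := fun d : G.Dart => d.fst)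
      (fun d _ => Finset.mem_univ d.fst)]
  refine Finset.prod_congr rfl fun v _ => ?_
  have h1 : ∀ d ∈ Finset.univ.filter (fun d : G.Dart => d.fst = v), x d.fst = x v := by
    intro d hd
    simp only [Finset.mem_filter] at hd
    rw [hd.2]
  rw [Finset.prod_congr rfl h1, Finset.prod_const,
    SimpleGraph.dart_fst_fiber_card_eq_degree]

lemma dart_prod_eq_edge_prod {V : Type*} [Fintype V] [DecidableEq V]
    (G : SimpleGraph V) [DecidableRel G.Adj] (x : V → ℝ) :
    (∏ d : G.Dart, x d.fst)
      = ∏ e ∈ G.edgeFinset,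
          Sym2.lift ⟨fun u v => x u * x v, fun u v => mul_comm _ _⟩ e := by
  rw [← Finset.prod_fiberwise_of_maps_to (t := G.edgeFinset) (g := fun d : G.Dart => d.edge)
      (fun d _ => by rw [SimpleGraph.mem_edgeFinset]; exact d.edge_mem)]
  refine Finset.prod_congr rfl fun e he => ?_
  rw [SimpleGraph.mem_edgeFinset] at he
  induction e with
  | _ u v =>
    have hadj : G.Adj u v := he
    set d : G.Dart := ⟨(u, v), hadj⟩ with hd
    have hfib : (Finset.univ.filter fun d' : G.Dart => d'.edge = s(u, v)) = {d, d.symm} := by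
      have := d.edge_fiber
      exact this
    rw [hfib, Finset.prod_insert (by simp [d.symm_ne.symm]), Finset.prod_singleton]
    simp [d, SimpleGraph.Dart.symm]

/-- For a finite graph `G` with all degrees even, the capacity of
`P_G(x) = ∏_{(u,v) ∈ E} (x_u + x_v)` with respect to `α_v = d_v / 2`
equals `2^{|E(G)|}`. -/
theorem stmt_16 {V : Type*} [Fintype V] [DecidableEq V]
    (G : SimpleGraph V) [DecidableRel G.Adj]
    (heven : ∀ v, Even (G.degree v)) :
    (⨅ x : {x : V → ℝ // ∀ v, 0 < x v},
      MvPolynomial.eval x.1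
        (∏ e ∈ G.edgeFinset,
          Sym2.lift ⟨fun u v => MvPolynomial.X u + MvPolynomial.X v,
            fun u v => add_comm _ _⟩ e : MvPolynomial V ℝ) /
        ∏ v, (x.1 v) ^ (G.degree v / 2))
      = 2 ^ G.edgeFinset.card := by
  -- the evaluated numerator
  have heval : ∀ x : V → ℝ,
      MvPolynomial.eval x
        (∏ e ∈ G.edgeFinset,
          Sym2.lift ⟨fun u v => MvPolynomial.X u + MvPolynomial.X v,
            fun u v => add_comm _ _⟩ e : MvPolynomial V ℝ)
      = ∏ e ∈ G.edgeFinset,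
          Sym2.lift ⟨fun u v => x u + x v, fun u v => add_comm _ _⟩ e := by
    intro x
    rw [map_prod]
    refine Finset.prod_congr rfl fun e _ => ?_
    induction e with
    | _ u v => simp
  -- key lower bound for numerator
  have key : ∀ x : V → ℝ, (∀ v, 0 < x v) →
      (2 : ℝ) ^ G.edgeFinset.card * ∏ v, x v ^ (G.degree v / 2)
        ≤ ∏ e ∈ G.edgeFinset,
            Sym2.lift ⟨fun u v => x u + x v, fun u v => add_comm _ _⟩ e := by
    intro x hx
    have hDpos : (0:ℝ) < ∏ v, x v ^ (G.degree v / 2) :=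
      Finset.prod_pos fun v _ => pow_pos (hx v) _
    have hNnn : (0:ℝ) ≤ ∏ e ∈ G.edgeFinset,
        Sym2.lift ⟨fun u v => x u + x v, fun u v => add_comm _ _⟩ e := by
      refine Finset.prod_nonneg fun e _ => ?_
      induction e with
      | _ u v => simpa using le_of_lt (add_pos (hx u) (hx v))
    have hLnn : (0:ℝ) ≤ (2 : ℝ) ^ G.edgeFinset.card * ∏ v, x v ^ (G.degree v / 2) :=
      le_of_lt (mul_pos (pow_pos two_pos _) hDpos)
    rw [← pow_le_pow_iff_left₀ hLnn hNnn two_ne_zero]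
    have hsq : ((2 : ℝ) ^ G.edgeFinset.card * ∏ v, x v ^ (G.degree v / 2)) ^ 2
        = 4 ^ G.edgeFinset.card * ∏ v, x v ^ G.degree v := by
      rw [mul_pow, ← pow_mul, ← Finset.prod_pow]
      congr 1
      · rw [show (4:ℝ) = 2 ^ 2 by norm_num, ← pow_mul, Nat.mul_comm]
      · refine Finset.prod_congr rfl fun v _ => ?_
        rw [← pow_mul]
        congr 1
        obtain ⟨k, hk⟩ := heven v
        omega
    rw [hsq, ← dart_prod_eq_vertex_prod, dart_prod_eq_edge_prod,
      ← Finset.prod_pow, ← Finset.prod_const (b := (4:ℝ)), ← Finset.prod_mul_distrib]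
    refine Finset.prod_le_prod ?_ ?_
    · intro e _
      induction e with
      | _ u v =>
        simp only [Sym2.lift_mk]
        nlinarith [(hx u).le, (hx v).le, mul_pos (hx u) (hx v), sq_nonneg (x u - x v)]
    · intro e _
      induction e with
      | _ u v =>
        simp only [Sym2.lift_mk]
        nlinarith [(hx u).le, (hx v).le, mul_pos (hx u) (hx v), sq_nonneg (x u - x v)]
  have hbdd : ∀ x : {x : V → ℝ // ∀ v, 0 < x v},
      (2:ℝ) ^ G.edgeFinset.card ≤
      MvPolynomial.eval x.1
        (∏ e ∈ G.edgeFinset,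
          Sym2.lift ⟨fun u v => MvPolynomial.X u + MvPolynomial.X v,
            fun u v => add_comm _ _⟩ e : MvPolynomial V ℝ) /
        ∏ v, (x.1 v) ^ (G.degree v / 2) := by
    rintro ⟨x, hx⟩
    have hDpos : (0:ℝ) < ∏ v, x v ^ (G.degree v / 2) :=
      Finset.prod_pos fun v _ => pow_pos (hx v) _
    rw [heval x, le_div_iff₀ hDpos]
    exact key x hx
  haveI : Nonempty {x : V → ℝ // ∀ v, 0 < x v} := ⟨⟨fun _ => 1, fun _ => one_pos⟩⟩
  refine le_antisymm ?_ (le_ciInf hbdd)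
  · refine ciInf_le_of_le ⟨2 ^ G.edgeFinset.card, fun y ⟨x, hx⟩ => hx ▸ hbdd x⟩
      ⟨fun _ => 1, fun _ => one_pos⟩ ?_
    rw [heval]
    simp only [one_pow, Finset.prod_const_one, div_one]
    rw [Finset.prod_congr rfl (fun e _ => by
        induction e with
        | _ u v => norm_num : ∀ e ∈ G.edgeFinset,
          Sym2.lift ⟨fun u v => (1:ℝ) + 1, fun u v => add_comm _ _⟩ e = 2),
      Finset.prod_const]
end
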